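/- arXiv:2508.01976 — 6 statements merged into one kernel-verified Lean document; each statement's English description precedes it below -/
import Mathlib

section
/- Let θ₁, θ₂ ∈ ℝ, let v ≥ 0 be a variance, and let K, L ∈ ℕ. Define C_{K,j} := (K.choose (2*j)) * ((2*j)! / (j! * 2^j)). Let μ := (gaussianReal θ₁ v).prod (gaussianReal θ₂ v) on ℝ × ℝ. Then ∫ ( Σ_{j=0}^{⌊K/2⌋} Σ_{λ=0}^{⌊L/2⌋} C_{K,j} * C_{L,λ} * (−1)^{j+λ} * v^{j+λ} * x₁^(K−2*j) * x₂^(L−2*λ) ) dμ(x₁, x₂) = θ₁^K * θ₂^L. -/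
open MeasureTheory ProbabilityTheory Real Finset
open scoped NNReal ENNReal Nat

namespace DebiasAux

lemma fac_two_mul (n : ℕ) : (2 * n).factorial = (2 * n - 1)‼ * (2 ^ n * n.factorial) := by
  cases n with
  | zero => decide
  | succ m =>
    rw [show 2 * (m + 1) = (2 * m + 1) + 1 by ring,
      Nat.factorial_eq_mul_doubleFactorial (2 * m + 1),
      show (2 * m + 1) + 1 = 2 * (m + 1) by ring, Nat.doubleFactorial_two_mul,
      show 2 * (m + 1) - 1 = 2 * m + 1 by omega]
    ring

lemma div_eq_dfac (j : ℕ) : (2 * j).factorial / (j.factorial * 2 ^ j) = (2 * j - 1)‼ := by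
  rw [fac_two_mul, mul_comm (2 ^ j), Nat.mul_div_cancel _ (by positivity)]

lemma dfac_cast (n : ℕ) : ((2 * n - 1)‼ : ℝ) = (2 * n).factorial / (2 ^ n * n.factorial) := by
  rw [fac_two_mul]
  push_cast
  field_simp

lemma key_real (K j a : ℕ) :
    (K.choose (2 * j) : ℝ) * ((2 * j - 1)‼ : ℕ) * ((K - 2 * j).choose (2 * a) : ℕ)
        * ((2 * a - 1)‼ : ℕ)
      = (K.choose (2 * (j + a)) : ℝ) * ((2 * (j + a) - 1)‼ : ℕ) * ((j + a).choose j : ℕ) := by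
  rcases le_or_gt (2 * j + 2 * a) K with h | h
  · have h1 : 2 * j ≤ K := by omega
    have h2 : 2 * a ≤ K - 2 * j := by omega
    have h3 : 2 * (j + a) ≤ K := by omega
    have h4 : j ≤ j + a := Nat.le_add_right _ _
    rw [Nat.cast_choose ℝ h1, Nat.cast_choose ℝ h2, Nat.cast_choose ℝ h3, Nat.cast_choose ℝ h4,
      dfac_cast, dfac_cast, dfac_cast,
      show K - 2 * j - 2 * a = K - 2 * (j + a) by omega,
      show j + a - j = a by omega]
    have f1 : ((2 * j).factorial : ℝ) ≠ 0 := Nat.cast_ne_zero.mpr (Nat.factorial_ne_zero _)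
    have f2 : ((2 * a).factorial : ℝ) ≠ 0 := Nat.cast_ne_zero.mpr (Nat.factorial_ne_zero _)
    have f3 : ((K - 2 * j).factorial : ℝ) ≠ 0 := Nat.cast_ne_zero.mpr (Nat.factorial_ne_zero _)
    have f4 : ((K - 2 * (j + a)).factorial : ℝ) ≠ 0 := Nat.cast_ne_zero.mpr (Nat.factorial_ne_zero _)
    have f5 : ((2 * (j + a)).factorial : ℝ) ≠ 0 := Nat.cast_ne_zero.mpr (Nat.factorial_ne_zero _)
    have f6 : (j.factorial : ℝ) ≠ 0 := Nat.cast_ne_zero.mpr (Nat.factorial_ne_zero _)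
    have f7 : (a.factorial : ℝ) ≠ 0 := Nat.cast_ne_zero.mpr (Nat.factorial_ne_zero _)
    have f8 : ((j + a).factorial : ℝ) ≠ 0 := Nat.cast_ne_zero.mpr (Nat.factorial_ne_zero _)
    have p1 : ((2 : ℝ) ^ j) ≠ 0 := by positivity
    have p2 : ((2 : ℝ) ^ a) ≠ 0 := by positivity
    have p3 : ((2 : ℝ) ^ (j + a)) ≠ 0 := by positivity
    field_simp
    ring
  · rw [Nat.choose_eq_zero_of_lt (show K < 2 * (j + a) by omega)]
    by_cases hj : 2 * j ≤ K
    · rw [Nat.choose_eq_zero_of_lt (show K - 2 * j < 2 * a by omega)]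
      simp
    · rw [Nat.choose_eq_zero_of_lt (show K < 2 * j by omega)]
      simp

lemma reindex (m : ℕ) (f : ℕ → ℝ) :
    ∑ i ∈ range (m + 1), (if Even i then f i else 0) = ∑ a ∈ range (m / 2 + 1), f (2 * a) := by
  rw [← Finset.sum_filter]
  refine Finset.sum_nbij' (fun i => i / 2) (fun a => 2 * a) ?_ ?_ ?_ ?_ ?_
  · intro i hi
    simp only [Finset.mem_filter, Finset.mem_range, Nat.even_iff] at hi ⊢
    omega
  · intro a ha
    simp only [Finset.mem_filter, Finset.mem_range, Nat.even_iff] at ha ⊢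
    omega
  · intro i hi
    simp only [Finset.mem_filter, Finset.mem_range, Nat.even_iff] at hi
    show 2 * (i / 2) = i
    omega
  · intro a _
    show 2 * a / 2 = a
    omega
  · intro i hi
    simp only [Finset.mem_filter, Finset.mem_range, Nat.even_iff] at hi
    show f i = f (2 * (i / 2))
    congr 1
    omega

lemma alg (θ w : ℝ) (K : ℕ) :
    ∑ j ∈ range (K / 2 + 1), (K.choose (2 * j) : ℝ) * ((2 * j - 1)‼ : ℕ) * (-1) ^ j * w ^ j *
      (∑ i ∈ range (K - 2 * j + 1), ((K - 2 * j).choose i : ℝ) * θ ^ (K - 2 * j - i) *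
        (if Even i then (((i - 1)‼ : ℕ) : ℝ) * w ^ (i / 2) else 0))
    = θ ^ K := by
  have hinner : ∀ j : ℕ,
      (∑ i ∈ range (K - 2 * j + 1), ((K - 2 * j).choose i : ℝ) * θ ^ (K - 2 * j - i) *
        (if Even i then (((i - 1)‼ : ℕ) : ℝ) * w ^ (i / 2) else 0))
      = ∑ a ∈ range (K / 2 + 1), ((K - 2 * j).choose (2 * a) : ℝ) * θ ^ (K - 2 * j - 2 * a) *
          (((2 * a - 1)‼ : ℕ) : ℝ) * w ^ a := by
    intro j
    have step1 : (∑ i ∈ range (K - 2 * j + 1), ((K - 2 * j).choose i : ℝ) * θ ^ (K - 2 * j - i) *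
        (if Even i then (((i - 1)‼ : ℕ) : ℝ) * w ^ (i / 2) else 0))
        = ∑ i ∈ range (K - 2 * j + 1), (if Even i then
            ((K - 2 * j).choose i : ℝ) * θ ^ (K - 2 * j - i) * ((((i - 1)‼ : ℕ) : ℝ) * w ^ (i / 2))
            else 0) := by
      refine Finset.sum_congr rfl fun i _ => ?_
      by_cases h : Even i <;> simp [h]
    rw [step1, reindex (K - 2 * j)
      (fun i => ((K - 2 * j).choose i : ℝ) * θ ^ (K - 2 * j - i) *
        ((((i - 1)‼ : ℕ) : ℝ) * w ^ (i / 2)))]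
    have step2 : ∀ a : ℕ, ((K - 2 * j).choose (2 * a) : ℝ) * θ ^ (K - 2 * j - 2 * a) *
          ((((2 * a - 1)‼ : ℕ) : ℝ) * w ^ (2 * a / 2))
        = ((K - 2 * j).choose (2 * a) : ℝ) * θ ^ (K - 2 * j - 2 * a) *
          (((2 * a - 1)‼ : ℕ) : ℝ) * w ^ a := by
      intro a
      rw [show 2 * a / 2 = a from by omega]
      ring
    rw [Finset.sum_congr rfl fun a _ => step2 a]
    refine Finset.sum_subset (Finset.range_subset_range.mpr (by omega)) fun a _ ha => ?_
    rw [Nat.choose_eq_zero_of_lt (by simp only [Finset.mem_range] at ha ⊢; omega)]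
    simp
  simp only [hinner, Finset.mul_sum]
  rw [← Finset.sum_product']
  have hmaps : ∀ p : ℕ × ℕ, p ∈ (range (K / 2 + 1)) ×ˢ (range (K / 2 + 1)) →
      p.1 + p.2 ∈ range (K + 1) := by
    intro p hp
    simp only [Finset.mem_product, Finset.mem_range] at hp ⊢
    omega
  rw [← Finset.sum_fiberwise_of_maps_to (g := fun p : ℕ × ℕ => p.1 + p.2)
    (t := range (K + 1)) hmaps]
  have hpoint : ∀ j a : ℕ,
      (K.choose (2 * j) : ℝ) * ((2 * j - 1)‼ : ℕ) * (-1) ^ j * w ^ j *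
        (((K - 2 * j).choose (2 * a) : ℝ) * θ ^ (K - 2 * j - 2 * a) *
          (((2 * a - 1)‼ : ℕ) : ℝ) * w ^ a)
      = (K.choose (2 * (j + a)) : ℝ) * (((2 * (j + a) - 1)‼ : ℕ) : ℝ) * w ^ (j + a) *
          θ ^ (K - 2 * (j + a)) * ((((j + a).choose j : ℕ) : ℝ) * (-1) ^ j) := by
    intro j a
    rw [show K - 2 * j - 2 * a = K - 2 * (j + a) from by omega]
    linear_combination ((-1 : ℝ)) ^ j * w ^ j * w ^ a * θ ^ (K - 2 * (j + a)) * key_real K j a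
  have hfiber : ∀ s ∈ range (K + 1),
      (∑ p ∈ ((range (K / 2 + 1)) ×ˢ (range (K / 2 + 1))).filter
          (fun p : ℕ × ℕ => p.1 + p.2 = s),
        (K.choose (2 * p.1) : ℝ) * ((2 * p.1 - 1)‼ : ℕ) * (-1) ^ p.1 * w ^ p.1 *
          (((K - 2 * p.1).choose (2 * p.2) : ℝ) * θ ^ (K - 2 * p.1 - 2 * p.2) *
            (((2 * p.2 - 1)‼ : ℕ) : ℝ) * w ^ p.2))
      = if s = 0 then θ ^ K else 0 := by
    intro s _
    have hcongr : ∀ p ∈ ((range (K / 2 + 1)) ×ˢ (range (K / 2 + 1))).filter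
          (fun p : ℕ × ℕ => p.1 + p.2 = s),
        (K.choose (2 * p.1) : ℝ) * ((2 * p.1 - 1)‼ : ℕ) * (-1) ^ p.1 * w ^ p.1 *
          (((K - 2 * p.1).choose (2 * p.2) : ℝ) * θ ^ (K - 2 * p.1 - 2 * p.2) *
            (((2 * p.2 - 1)‼ : ℕ) : ℝ) * w ^ p.2)
        = (K.choose (2 * s) : ℝ) * (((2 * s - 1)‼ : ℕ) : ℝ) * w ^ s * θ ^ (K - 2 * s) *
            (((s.choose p.1 : ℕ) : ℝ) * (-1) ^ p.1) := by
      intro p hp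
      simp only [Finset.mem_filter] at hp
      rw [hpoint p.1 p.2, hp.2]
    rw [Finset.sum_congr rfl hcongr, ← Finset.mul_sum]
    by_cases hsK : 2 * s ≤ K
    · have hA : (∑ p ∈ ((range (K / 2 + 1)) ×ˢ (range (K / 2 + 1))).filter
            (fun p : ℕ × ℕ => p.1 + p.2 = s),
          (((s.choose p.1 : ℕ) : ℝ) * (-1) ^ p.1))
          = ∑ j ∈ range (s + 1), ((s.choose j : ℕ) : ℝ) * (-1) ^ j := by
        refine Finset.sum_nbij' (fun p => p.1) (fun j => (j, s - j)) ?_ ?_ ?_ ?_ ?_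
        · intro p hp
          simp only [Finset.mem_filter, Finset.mem_product, Finset.mem_range] at hp ⊢
          omega
        · intro j hj
          simp only [Finset.mem_filter, Finset.mem_product, Finset.mem_range] at hj ⊢
          omega
        · intro p hp
          simp only [Finset.mem_filter, Finset.mem_product, Finset.mem_range] at hp
          show (p.1, s - p.1) = p
          have : s - p.1 = p.2 := by omega
          rw [this]
        · intro j hj
          rfl
        · intro p hp
          rfl
      rw [hA]
      have hR : (∑ j ∈ range (s + 1), ((s.choose j : ℕ) : ℝ) * (-1) ^ j)
          = if s = 0 then (1 : ℝ) else 0 := by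
        have hI := Int.alternating_sum_range_choose (n := s)
        have h2 : ((∑ m ∈ range (s + 1), (-1) ^ m * (s.choose m : ℤ) : ℤ) : ℝ)
            = ((if s = 0 then 1 else 0 : ℤ) : ℝ) := congrArg (fun z : ℤ => (z : ℝ)) hI
        push_cast at h2
        rw [← h2]
        exact Finset.sum_congr rfl fun m _ => mul_comm _ _
      rw [hR]
      by_cases hs0 : s = 0
      · subst hs0
        simp [show (2 * 0 - 1)‼ = 1 from rfl]
      · simp [hs0]
    · rw [Nat.choose_eq_zero_of_lt (by omega)]
      have hs0 : s ≠ 0 := by omega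
      simp [hs0]
  rw [Finset.sum_congr rfl hfiber, Finset.sum_ite_eq' (range (K + 1)) 0 (fun _ => θ ^ K)]
  simp


lemma integrable_pow_exp {b : ℝ} (hb : 0 < b) (n : ℕ) :
    Integrable fun x : ℝ => x ^ n * rexp (-b * x ^ 2) := by
  have h := integrable_rpow_mul_exp_neg_mul_sq hb (s := (n : ℝ))
    (lt_of_lt_of_le (by norm_num) (Nat.cast_nonneg n))
  simpa [Real.rpow_natCast] using h

lemma J_rec {b : ℝ} (hb : 0 < b) (n : ℕ) :
    ∫ x : ℝ, x ^ (n + 2) * rexp (-b * x ^ 2)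
      = ((n : ℝ) + 1) / (2 * b) * ∫ x : ℝ, x ^ n * rexp (-b * x ^ 2) := by
  have hderiv : ∀ x : ℝ, HasDerivAt (fun y : ℝ => y ^ (n + 1) * rexp (-b * y ^ 2))
      (((n : ℝ) + 1) * (x ^ n * rexp (-b * x ^ 2))
        - 2 * b * (x ^ (n + 2) * rexp (-b * x ^ 2))) x := by
    intro x
    have h1 : HasDerivAt (fun y : ℝ => y ^ (n + 1)) (((n : ℝ) + 1) * x ^ n) x := by
      simpa using hasDerivAt_pow (n + 1) x
    have h0 : HasDerivAt (fun y : ℝ => -b * y ^ 2) (-b * (2 * x)) x := by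
      simpa using (hasDerivAt_pow 2 x).const_mul (-b)
    have : HasDerivAt (fun y : ℝ => y ^ (n + 1) * rexp (-b * y ^ 2)) _ x := h1.mul h0.exp
    convert this using 1
    ring
  have hzero := integral_eq_zero_of_hasDerivAt_of_integrable hderiv
    (((integrable_pow_exp hb n).const_mul _).sub ((integrable_pow_exp hb (n + 2)).const_mul _))
    (integrable_pow_exp hb (n + 1))
  rw [integral_sub ((integrable_pow_exp hb n).const_mul _)
      ((integrable_pow_exp hb (n + 2)).const_mul _),
    integral_const_mul, integral_const_mul, sub_eq_zero] at hzero
  have hb' : (2 : ℝ) * b ≠ 0 := by positivity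
  rw [div_mul_eq_mul_div, hzero, mul_div_cancel_left₀ _ hb']

lemma J_one {b : ℝ} (hb : 0 < b) : ∫ x : ℝ, x ^ 1 * rexp (-b * x ^ 2) = 0 := by
  have hderiv : ∀ x : ℝ, HasDerivAt (fun y : ℝ => rexp (-b * y ^ 2))
      (-(2 * b) * (x ^ 1 * rexp (-b * x ^ 2))) x := by
    intro x
    have h0 : HasDerivAt (fun y : ℝ => -b * y ^ 2) (-b * (2 * x)) x := by
      simpa using (hasDerivAt_pow 2 x).const_mul (-b)
    convert h0.exp using 1
    ring
  have hzero := integral_eq_zero_of_hasDerivAt_of_integrable hderiv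
    ((integrable_pow_exp hb 1).const_mul _) (integrable_exp_neg_mul_sq hb)
  rw [integral_const_mul] at hzero
  rcases mul_eq_zero.mp hzero with h | h
  · exact absurd h (neg_ne_zero.mpr (by positivity))
  · exact h

lemma J_even {b : ℝ} (hb : 0 < b) : ∀ m : ℕ,
    ∫ x : ℝ, x ^ (2 * m) * rexp (-b * x ^ 2)
      = (((2 * m - 1)‼ : ℕ) : ℝ) * ((2 * b)⁻¹) ^ m * √(π / b)
  | 0 => by
    simp only [Nat.mul_zero, pow_zero, one_mul, Nat.zero_sub, mul_one]
    rw [show ((0 : ℕ) - 1)‼ = 1 from rfl]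
    rw [integral_gaussian]
    norm_num
  | (m + 1) => by
    rw [show 2 * (m + 1) = 2 * m + 2 from by ring, J_rec hb, J_even hb m,
      show (2 * m + 2 - 1)‼ = (2 * m + 1) * (2 * m - 1)‼ from by
        rw [show 2 * m + 2 - 1 = 2 * m + 1 from by omega]
        exact Nat.doubleFactorial_add_one (2 * m)]
    push_cast
    have hb0 : b ≠ 0 := hb.ne'
    field_simp
    ring_nf
    simp [hb0]

lemma J_odd {b : ℝ} (hb : 0 < b) : ∀ m : ℕ,
    ∫ x : ℝ, x ^ (2 * m + 1) * rexp (-b * x ^ 2) = 0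
  | 0 => by simpa using J_one hb
  | (m + 1) => by
    rw [show 2 * (m + 1) + 1 = (2 * m + 1) + 2 from by ring, J_rec hb, J_odd hb m, mul_zero]

lemma vpos {v : ℝ≥0} (hv : v ≠ 0) : (0 : ℝ) < (v : ℝ) :=
  NNReal.coe_pos.mpr (pos_iff_ne_zero.mpr hv)

lemma pdf0_eq {v : ℝ≥0} (x : ℝ) :
    gaussianPDFReal 0 v x = (√(2 * π * v))⁻¹ * rexp (-(2 * (v : ℝ))⁻¹ * x ^ 2) := by
  rw [gaussianPDFReal]
  congr 2
  rw [sub_zero]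
  ring

lemma pdf0_moment {v : ℝ≥0} (hv : v ≠ 0) (n : ℕ) :
    ∫ x : ℝ, gaussianPDFReal 0 v x * x ^ n
      = if Even n then (((n - 1)‼ : ℕ) : ℝ) * (v : ℝ) ^ (n / 2) else 0 := by
  have hv' := vpos hv
  have hb : 0 < (2 * (v : ℝ))⁻¹ := by positivity
  have hrw : (fun x : ℝ => gaussianPDFReal 0 v x * x ^ n)
      = fun x : ℝ => (√(2 * π * v))⁻¹ * (x ^ n * rexp (-(2 * (v : ℝ))⁻¹ * x ^ 2)) := by
    funext x
    rw [pdf0_eq]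
    ring
  rw [hrw, integral_const_mul]
  have hsq : √(π / (2 * (v : ℝ))⁻¹) = √(2 * π * v) := by
    congr 1
    field_simp
  by_cases hn : Even n
  · obtain ⟨m, hm⟩ := hn
    have hn2 : n = 2 * m := by omega
    rw [hn2, J_even hb m, hsq, if_pos (even_two_mul m),
      show 2 * m / 2 = m from by omega,
      show ((2 : ℝ) * (2 * (v : ℝ))⁻¹)⁻¹ = (v : ℝ) from by field_simp]
    have hs : √(2 * π * (v : ℝ)) ≠ 0 := by positivity
    field_simp
  · obtain ⟨m, hm⟩ := Nat.not_even_iff_odd.mp hn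
    rw [if_neg hn, hm, J_odd hb m, mul_zero]

lemma integrable_pdf0_mul_pow {v : ℝ≥0} (hv : v ≠ 0) (n : ℕ) :
    Integrable (fun x : ℝ => gaussianPDFReal 0 v x * x ^ n) := by
  have hv' := vpos hv
  have hb : 0 < (2 * (v : ℝ))⁻¹ := by positivity
  have hrw : (fun x : ℝ => gaussianPDFReal 0 v x * x ^ n)
      = fun x : ℝ => (√(2 * π * v))⁻¹ * (x ^ n * rexp (-(2 * (v : ℝ))⁻¹ * x ^ 2)) := by
    funext x
    rw [pdf0_eq]
    ring
  rw [hrw]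
  exact (integrable_pow_exp hb n).const_mul _

lemma integral_gaussianReal_eq {v : ℝ≥0} (hv : v ≠ 0) (θ : ℝ) (g : ℝ → ℝ) :
    ∫ x, g x ∂(gaussianReal θ v) = ∫ x : ℝ, gaussianPDFReal θ v x * g x := by
  rw [gaussianReal_of_var_ne_zero _ hv, gaussianPDF_def]
  have h : ∫ x, g x ∂((volume : Measure ℝ).withDensity
        fun x => ENNReal.ofReal (gaussianPDFReal θ v x))
      = ∫ x : ℝ, (fun y : ℝ => (gaussianPDFReal θ v y).toNNReal) x • g x :=
    integral_withDensity_eq_integral_smul ((measurable_gaussianPDFReal θ v).real_toNNReal) g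
  rw [h]
  refine integral_congr_ae (Filter.Eventually.of_forall fun x => ?_)
  simp [NNReal.smul_def, Real.coe_toNNReal _ (gaussianPDFReal_nonneg θ v x)]

lemma shift_pdf (θ : ℝ) (v : ℝ≥0) (F : ℝ → ℝ) :
    ∫ x : ℝ, gaussianPDFReal θ v x * F x = ∫ x : ℝ, gaussianPDFReal 0 v x * F (x + θ) := by
  rw [← integral_add_right_eq_self (fun x => gaussianPDFReal θ v x * F x) θ]
  refine integral_congr_ae (Filter.Eventually.of_forall fun x => ?_)
  show gaussianPDFReal θ v (x + θ) * F (x + θ) = _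
  rw [gaussianPDFReal_add, sub_self]

lemma binom_expand (v : ℝ≥0) (θ : ℝ) (m : ℕ) :
    (fun x : ℝ => gaussianPDFReal 0 v x * (x + θ) ^ m)
      = fun x => ∑ i ∈ range (m + 1),
          (θ ^ (m - i) * (m.choose i : ℝ)) * (gaussianPDFReal 0 v x * x ^ i) := by
  funext x
  rw [add_pow, Finset.mul_sum]
  exact Finset.sum_congr rfl fun i _ => by ring

lemma integral_pdf0_mul_sum {v : ℝ≥0} (hv : v ≠ 0) (c : ℕ → ℝ) (N : ℕ) (e : ℕ → ℕ) (θ : ℝ) :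
    ∫ x : ℝ, gaussianPDFReal 0 v x * (∑ j ∈ range N, c j * (x + θ) ^ e j)
      = ∑ j ∈ range N, c j * ∑ i ∈ range (e j + 1),
          ((e j).choose i : ℝ) * θ ^ (e j - i) *
            (if Even i then (((i - 1)‼ : ℕ) : ℝ) * (v : ℝ) ^ (i / 2) else 0) := by
  have hint : ∀ m : ℕ, Integrable (fun x : ℝ => gaussianPDFReal 0 v x * (x + θ) ^ m) := by
    intro m
    rw [binom_expand]
    exact integrable_finset_sum _ fun i _ => (integrable_pdf0_mul_pow hv i).const_mul _
  have h1 : (fun x : ℝ => gaussianPDFReal 0 v x * (∑ j ∈ range N, c j * (x + θ) ^ e j))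
      = fun x => ∑ j ∈ range N, c j * (gaussianPDFReal 0 v x * (x + θ) ^ e j) := by
    funext x
    rw [Finset.mul_sum]
    exact Finset.sum_congr rfl fun j _ => by ring
  rw [h1, integral_finset_sum _ fun j _ => (hint (e j)).const_mul _]
  refine Finset.sum_congr rfl fun j _ => ?_
  rw [integral_const_mul]
  congr 1
  rw [binom_expand, integral_finset_sum _ fun i _ => (integrable_pdf0_mul_pow hv i).const_mul _]
  refine Finset.sum_congr rfl fun i _ => ?_
  rw [integral_const_mul, pdf0_moment hv i]
  ring

lemma onedim (θ : ℝ) (v : ℝ≥0) (K : ℕ) :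
    ∫ x : ℝ, (∑ j ∈ Finset.range (K / 2 + 1),
        ((K.choose (2 * j) * ((2 * j).factorial / (j.factorial * 2 ^ j)) : ℕ) : ℝ)
          * (-1) ^ j * (v : ℝ) ^ j * x ^ (K - 2 * j)) ∂(gaussianReal θ v) = θ ^ K := by
  simp only [div_eq_dfac]
  by_cases hv : v = 0
  · subst hv
    rw [gaussianReal_zero_var, integral_dirac]
    rw [Finset.sum_eq_single 0]
    · simp
    · intro j _ hj0
      simp [zero_pow hj0]
    · intro h
      exact absurd (Finset.mem_range.mpr (by omega)) h
  · calc
      ∫ x : ℝ, (∑ j ∈ Finset.range (K / 2 + 1),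
          ((K.choose (2 * j) * (2 * j - 1)‼ : ℕ) : ℝ)
            * (-1) ^ j * (v : ℝ) ^ j * x ^ (K - 2 * j)) ∂(gaussianReal θ v)
        = ∫ x : ℝ, gaussianPDFReal θ v x * (∑ j ∈ Finset.range (K / 2 + 1),
            ((K.choose (2 * j) * (2 * j - 1)‼ : ℕ) : ℝ)
              * (-1) ^ j * (v : ℝ) ^ j * x ^ (K - 2 * j)) := integral_gaussianReal_eq hv θ _
      _ = ∫ x : ℝ, gaussianPDFReal 0 v x * (∑ j ∈ Finset.range (K / 2 + 1),
            ((K.choose (2 * j) * (2 * j - 1)‼ : ℕ) : ℝ)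
              * (-1) ^ j * (v : ℝ) ^ j * (x + θ) ^ (K - 2 * j)) := shift_pdf θ v _
      _ = ∑ j ∈ range (K / 2 + 1),
            (((K.choose (2 * j) * (2 * j - 1)‼ : ℕ) : ℝ) * (-1) ^ j * (v : ℝ) ^ j) *
            ∑ i ∈ range ((K - 2 * j) + 1),
              ((K - 2 * j).choose i : ℝ) * θ ^ (K - 2 * j - i) *
                (if Even i then (((i - 1)‼ : ℕ) : ℝ) * (v : ℝ) ^ (i / 2) else 0) :=
          integral_pdf0_mul_sum hv _ _ _ θ
      _ = θ ^ K := by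
          rw [← alg θ (v : ℝ) K]
          exact Finset.sum_congr rfl fun j _ => by push_cast; ring

end DebiasAux


/-- Bivariate debiasing identity (d = 2 case of the debiased moment matrix):
for independent `X₁ ~ N(θ₁, v)` and `X₂ ~ N(θ₂, v)`, the statistic
`∑_j ∑_λ C_{K,j} C_{L,λ} (-1)^{j+λ} v^{j+λ} X₁^(K-2j) X₂^(L-2λ)` is an unbiased
estimator of `θ₁^K θ₂^L`, where `C_{K,j} = (K choose 2j) (2j)!/(j! 2^j)`. -/
theorem debiased_moment_unbiased_two_dim (θ₁ θ₂ : ℝ) (v : ℝ≥0) (K L : ℕ) :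
    ∫ p : ℝ × ℝ,
        (∑ j ∈ Finset.range (K / 2 + 1), ∑ l ∈ Finset.range (L / 2 + 1),
          ((K.choose (2 * j) * ((2 * j).factorial / (j.factorial * 2 ^ j)) : ℕ) : ℝ)
            * ((L.choose (2 * l) * ((2 * l).factorial / (l.factorial * 2 ^ l)) : ℕ) : ℝ)
            * (-1) ^ (j + l) * (v : ℝ) ^ (j + l)
            * p.1 ^ (K - 2 * j) * p.2 ^ (L - 2 * l))
        ∂((gaussianReal θ₁ v).prod (gaussianReal θ₂ v))
      = θ₁ ^ K * θ₂ ^ L := by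
  have h1 : ∀ p : ℝ × ℝ,
      (∑ j ∈ Finset.range (K / 2 + 1), ∑ l ∈ Finset.range (L / 2 + 1),
        ((K.choose (2 * j) * ((2 * j).factorial / (j.factorial * 2 ^ j)) : ℕ) : ℝ)
          * ((L.choose (2 * l) * ((2 * l).factorial / (l.factorial * 2 ^ l)) : ℕ) : ℝ)
          * (-1) ^ (j + l) * (v : ℝ) ^ (j + l)
          * p.1 ^ (K - 2 * j) * p.2 ^ (L - 2 * l))
      = (fun x : ℝ => ∑ j ∈ Finset.range (K / 2 + 1),
          ((K.choose (2 * j) * ((2 * j).factorial / (j.factorial * 2 ^ j)) : ℕ) : ℝ)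
            * (-1) ^ j * (v : ℝ) ^ j * x ^ (K - 2 * j)) p.1
        * (fun x : ℝ => ∑ l ∈ Finset.range (L / 2 + 1),
          ((L.choose (2 * l) * ((2 * l).factorial / (l.factorial * 2 ^ l)) : ℕ) : ℝ)
            * (-1) ^ l * (v : ℝ) ^ l * x ^ (L - 2 * l)) p.2 := by
    intro p
    simp only
    rw [Finset.sum_mul_sum]
    refine Finset.sum_congr rfl fun j _ => Finset.sum_congr rfl fun l _ => ?_
    rw [pow_add, pow_add]
    ring
  rw [integral_congr_ae (Filter.Eventually.of_forall h1),
    MeasureTheory.integral_prod_mul (μ := gaussianReal θ₁ v) (ν := gaussianReal θ₂ v)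
      (fun x : ℝ => ∑ j ∈ Finset.range (K / 2 + 1),
        ((K.choose (2 * j) * ((2 * j).factorial / (j.factorial * 2 ^ j)) : ℕ) : ℝ)
          * (-1) ^ j * (v : ℝ) ^ j * x ^ (K - 2 * j))
      (fun x : ℝ => ∑ l ∈ Finset.range (L / 2 + 1),
        ((L.choose (2 * l) * ((2 * l).factorial / (l.factorial * 2 ^ l)) : ℕ) : ℝ)
          * (-1) ^ l * (v : ℝ) ^ l * x ^ (L - 2 * l)),
    DebiasAux.onedim, DebiasAux.onedim]
end

section
/- Let d ∈ ℕ, θ : Fin d → ℝ, let v ≥ 0 be a variance, and let a : Fin d → ℕ be a multi-index. Define C_{K,k} := (K.choose (2*k)) * ((2*k)! / (k! * 2^k)). Let μ := Measure.pi (fun j : Fin d => gaussianReal (θ j) v) on Fin d → ℝ. Then ∫ ( ∏_{j : Fin d} Σ_{k=0}^{⌊(a j)/2⌋} C_{a j, k} * (−1)^k * v^k * (x j)^(a j − 2*k) ) dμ(x) = ∏_{j : Fin d} (θ j)^(a j). That is, the debiased monomial statistic of an observation X = θ + ε, where ε has independent N(0, v) coordinates, is an unbiased estimator of the monomial ∏_j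 θ_j^{a_j}. -/
open MeasureTheory ProbabilityTheory
open scoped NNReal

section Debias
open Real Filter Asymptotics Fintype
open scoped ENNReal

noncomputable section
namespace Debias

def D : ℕ → ℕ
  | 0 => 1
  | (k+1) => (2*k+1) * D k

lemma D_mul_fact (k : ℕ) : D k * (k.factorial * 2^k) = (2*k).factorial := by
  induction k with
  | zero => simp [D]
  | succ k ih =>
      have h : 2*(k+1) = (2*k+1)+1 := by ring
      have e2 : (2*k+1+1).factorial = (2*k+1+1)*((2*k+1)*(2*k).factorial) := by
        rw [Nat.factorial_succ, Nat.factorial_succ]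
      rw [h, e2, ← ih, Nat.factorial_succ]
      show (2*k+1) * D k * _ = _
      ring

lemma cast_div_eq_D (k : ℕ) : (((2*k).factorial / (k.factorial * 2^k) : ℕ) : ℝ) = (D k : ℝ) := by
  rw [← D_mul_fact, Nat.mul_div_cancel]
  positivity

lemma integrable_pow_mul_exp (n : ℕ) :
    Integrable (fun x : ℝ => x ^ n * Real.exp (-x^2/2)) := by
  have h4 : (0:ℝ) < 1/4 := by norm_num
  have hg : Integrable (fun x : ℝ => Real.exp (-(1/4) * x^2)) := integrable_exp_neg_mul_sq h4
  have hcont : Continuous fun x : ℝ => x ^ n * Real.exp (-x^2/2) := by continuity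
  refine hcont.locallyIntegrable.integrable_of_isBigO_cocompact
    (g := fun x : ℝ => Real.exp (-(1/4) * x^2)) ?_ (hg.integrableAtFilter _)
  have ht : Tendsto (fun x : ℝ => |x| ^ (n:ℝ) * Real.exp (-(1/4) * x^2)) (cocompact ℝ) (nhds 0) :=
    tendsto_rpow_abs_mul_exp_neg_mul_sq_cocompact h4 n
  refine IsBigO.of_bound 1 ?_
  filter_upwards [ht.eventually_le_const one_pos] with x hx
  have hsplit : Real.exp (-x^2/2) = Real.exp (-(1/4)*x^2) * Real.exp (-(1/4)*x^2) := by
    rw [← Real.exp_add]; ring_nf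
  have h1 : ‖x ^ n * Real.exp (-x^2/2)‖ = (|x| ^ (n:ℝ) * Real.exp (-(1/4)*x^2)) * Real.exp (-(1/4)*x^2) := by
    rw [norm_mul, Real.norm_eq_abs, Real.norm_eq_abs, abs_pow, abs_of_pos (Real.exp_pos _),
      hsplit, Real.rpow_natCast]
    ring
  rw [h1, one_mul, Real.norm_eq_abs, abs_of_pos (Real.exp_pos _)]
  exact mul_le_of_le_one_left (Real.exp_pos _).le hx

lemma hasDerivAt_exp_neg_sq (x : ℝ) :
    HasDerivAt (fun x : ℝ => Real.exp (-x^2/2)) (-x * Real.exp (-x^2/2)) x := by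
  have hinner : HasDerivAt (fun x : ℝ => -x^2/2) (-x) x := by
    have := ((hasDerivAt_pow 2 x).div_const 2).fun_neg
    rw [show (fun x : ℝ => -x^2/2) = fun i => -(i^2/2) by funext y; ring]
    exact this.congr_deriv (by norm_num)
  have := (Real.hasDerivAt_exp (-x^2/2)).comp x hinner
  simpa [mul_comm, Function.comp_def] using this

lemma J_zero : ∫ x : ℝ, Real.exp (-x^2/2) = Real.sqrt (2*π) := by
  have := integral_gaussian (1/2)
  simp only [neg_mul] at this
  have h2 : ∀ x : ℝ, -x^2/2 = -(1/2 * x^2) := fun x => by ring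
  simp_rw [h2]
  rw [this]
  rw [show π / (1/2) = 2*π by ring]

lemma J_one : ∫ x : ℝ, x * Real.exp (-x^2/2) = 0 := by
  have hderiv : ∀ x : ℝ, HasDerivAt (fun x : ℝ => -Real.exp (-x^2/2))
      (x * Real.exp (-x^2/2)) x := by
    intro x
    have := (hasDerivAt_exp_neg_sq x).fun_neg
    simpa using this
  have hf' : Integrable (fun x : ℝ => x * Real.exp (-x^2/2)) := by
    simpa using integrable_pow_mul_exp 1
  have hf : Integrable (fun x : ℝ => -Real.exp (-x^2/2)) := by
    have : Integrable (fun x : ℝ => -(x^0 * Real.exp (-x^2/2))) := (integrable_pow_mul_exp 0).neg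
    simpa only [pow_zero, one_mul] using this
  exact integral_eq_zero_of_hasDerivAt_of_integrable hderiv hf' hf

lemma J_rec (n : ℕ) : ∫ x : ℝ, x^(n+2) * Real.exp (-x^2/2)
    = (n+1 : ℝ) * ∫ x : ℝ, x^n * Real.exp (-x^2/2) := by
  have hderiv : ∀ x : ℝ, HasDerivAt (fun x : ℝ => x^(n+1) * Real.exp (-x^2/2))
      ((n+1 : ℝ) * x^n * Real.exp (-x^2/2) - x^(n+2) * Real.exp (-x^2/2)) x := by
    intro x
    have := (hasDerivAt_pow (n+1) x).mul (hasDerivAt_exp_neg_sq x)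
    exact this.congr_deriv (by push_cast; ring)
  have hf' : Integrable (fun x : ℝ => (n+1 : ℝ) * x^n * Real.exp (-x^2/2)
      - x^(n+2) * Real.exp (-x^2/2)) := by
    have h1 := (integrable_pow_mul_exp n).const_mul (n+1 : ℝ)
    have h2 := integrable_pow_mul_exp (n+2)
    simpa [mul_assoc] using h1.sub' h2
  have h0 := integral_eq_zero_of_hasDerivAt_of_integrable hderiv hf'
    (integrable_pow_mul_exp (n+1))
  rw [integral_sub (by simpa [mul_assoc] using (integrable_pow_mul_exp n).const_mul (n+1 : ℝ))
    (integrable_pow_mul_exp (n+2))] at h0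
  simp_rw [mul_assoc, integral_const_mul] at h0
  linarith

lemma J_val : ∀ n : ℕ, ∫ x : ℝ, x^n * Real.exp (-x^2/2)
    = (if Even n then (D (n/2) : ℝ) else 0) * Real.sqrt (2*π)
  | 0 => by simpa [D] using J_zero
  | 1 => by simpa using J_one
  | (n+2) => by
      rw [J_rec n, J_val n]
      have hpar : Even (n+2) ↔ Even n := by rw [Nat.even_iff, Nat.even_iff]; omega
      by_cases h : Even n
      · rw [if_pos h, if_pos (hpar.mpr h)]
        have h2 : (n+2)/2 = n/2 + 1 := by omega
        have h' : n % 2 = 0 := Nat.even_iff.mp h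
        have hn : 2*(n/2) = n := by omega
        rw [h2, D, hn]
        push_cast
        ring
      · rw [if_neg h, if_neg (fun hh => h (hpar.mp hh))]
        ring

lemma integral_gaussianReal {m : ℝ} {v : ℝ≥0} (hv : v ≠ 0) (g : ℝ → ℝ) :
    ∫ x, g x ∂(gaussianReal m v) = ∫ x, gaussianPDFReal m v x * g x := by
  rw [gaussianReal_of_var_ne_zero _ hv, gaussianPDF_def]
  have h : (fun x => ENNReal.ofReal (gaussianPDFReal m v x))
      = fun x => ((gaussianPDFReal m v x).toNNReal : ℝ≥0∞) := rfl
  rw [h, integral_withDensity_eq_integral_smul ((measurable_gaussianPDFReal m v).real_toNNReal) g]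
  congr 1 with x
  simp [NNReal.smul_def, Real.coe_toNNReal _ (gaussianPDFReal_nonneg m v x)]

lemma pdf_std (x : ℝ) : gaussianPDFReal 0 1 x = (Real.sqrt (2*π))⁻¹ * Real.exp (-x^2/2) := by
  rw [gaussianPDFReal_def]
  norm_num

lemma G_val (n : ℕ) : ∫ x, x^n ∂(gaussianReal 0 1)
    = (if Even n then (D (n/2) : ℝ) else 0) := by
  rw [integral_gaussianReal one_ne_zero]
  have hrw : ∀ x : ℝ, gaussianPDFReal 0 1 x * x^n
      = (Real.sqrt (2*π))⁻¹ * (x^n * Real.exp (-x^2/2)) := fun x => by rw [pdf_std]; ring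
  have hne : Real.sqrt (2*π) ≠ 0 := by positivity
  simp_rw [hrw, integral_const_mul, J_val]
  rw [mul_comm _ (Real.sqrt (2*π)), ← mul_assoc, inv_mul_cancel₀ hne, one_mul]

lemma integrable_pow_std (n : ℕ) : Integrable (fun x : ℝ => x^n) (gaussianReal 0 1) := by
  rw [gaussianReal_of_var_ne_zero _ one_ne_zero, gaussianPDF_def]
  have h : (fun x => ENNReal.ofReal (gaussianPDFReal 0 1 x))
      = fun x => ((gaussianPDFReal 0 1 x).toNNReal : ℝ≥0∞) := rfl
  rw [h, integrable_withDensity_iff_integrable_smul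
    ((measurable_gaussianPDFReal 0 1).real_toNNReal)]
  have : (fun x : ℝ => (gaussianPDFReal 0 1 x).toNNReal • x^n)
      = fun x : ℝ => (Real.sqrt (2*π))⁻¹ * (x^n * Real.exp (-x^2/2)) := by
    funext x
    rw [NNReal.smul_def, smul_eq_mul, Real.coe_toNNReal _ (gaussianPDFReal_nonneg 0 1 x), pdf_std]
    ring
  rw [this]
  exact (integrable_pow_mul_exp n).const_mul _

lemma gauss_decomp (θ : ℝ) (v : ℝ≥0) :
    ((gaussianReal 0 1).map (fun y => Real.sqrt v * y)).map (fun z => z + θ)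
      = gaussianReal θ v := by
  have h1 : (gaussianReal 0 1).map (fun y => Real.sqrt v * y) = gaussianReal 0 v := by
    have h := gaussianReal_map_const_mul (μ := 0) (v := 1) (Real.sqrt v)
    have hv : (⟨(Real.sqrt v)^2, sq_nonneg _⟩ : ℝ≥0) * 1 = v := by
      ext
      simp [Real.sq_sqrt v.coe_nonneg]
    rw [mul_zero] at h
    rw [h]
    congr 1
  rw [h1]
  have := gaussianReal_map_add_const (μ := 0) (v := v) θ
  rwa [zero_add] at this

lemma sum_even (n : ℕ) (f : ℕ → ℝ) :
    ∑ i ∈ Finset.range (n+1), (if Even i then f i else 0)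
      = ∑ s ∈ Finset.range (n/2+1), f (2*s) := by
  rw [← Finset.sum_filter]
  refine Finset.sum_nbij' (i := fun i => i/2) (j := fun s => 2*s) ?_ ?_ ?_ ?_ ?_ <;>
    intro a ha <;>
    simp only [Finset.mem_filter, Finset.mem_range, Nat.even_iff] at ha ⊢ <;>
    [skip; skip; skip; skip; (congr 1)] <;> omega

lemma integrable_pow_gauss (θ : ℝ) (v : ℝ≥0) (n : ℕ) :
    Integrable (fun x : ℝ => x^n) (gaussianReal θ v) := by
  rw [← gauss_decomp θ v]
  rw [integrable_map_measure (Continuous.aestronglyMeasurable (by continuity)) (by fun_prop)]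
  rw [integrable_map_measure (Continuous.aestronglyMeasurable (by continuity)) (by fun_prop)]
  simp only [Function.comp_def]
  have : (fun y : ℝ => ((Real.sqrt v * y) + θ)^n)
      = fun y : ℝ => ∑ i ∈ Finset.range (n+1),
        ((Real.sqrt v)^i * θ^(n-i) * (n.choose i : ℝ)) * y^i := by
    funext y
    simp only [add_pow, mul_pow]
    exact Finset.sum_congr rfl fun i _ => by ring
  rw [this]
  exact integrable_finset_sum _ fun i _ => (integrable_pow_std i).const_mul _

lemma M_val (θ : ℝ) (v : ℝ≥0) (n : ℕ) :
    ∫ x, x^n ∂(gaussianReal θ v)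
      = ∑ s ∈ Finset.range (n/2+1),
          ((n.choose (2*s) * D s : ℕ) : ℝ) * (v:ℝ)^s * θ^(n-2*s) := by
  rw [← gauss_decomp θ v]
  rw [integral_map (by fun_prop) (Continuous.aestronglyMeasurable (by continuity))]
  rw [integral_map (by fun_prop) (Continuous.aestronglyMeasurable (by continuity))]
  have h1 : (fun y : ℝ => ((Real.sqrt v * y) + θ)^n)
      = fun y : ℝ => ∑ i ∈ Finset.range (n+1),
        ((Real.sqrt v)^i * θ^(n-i) * (n.choose i : ℝ)) * y^i := by
    funext y
    simp only [add_pow, mul_pow]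
    exact Finset.sum_congr rfl fun i _ => by ring
  rw [h1, integral_finset_sum _ (fun i _ => (integrable_pow_std i).const_mul _)]
  simp_rw [integral_const_mul, G_val, mul_ite, mul_zero]
  rw [sum_even n (fun i => (Real.sqrt v)^i * θ^(n-i) * (n.choose i : ℝ) * (D (i/2) : ℝ))]
  refine Finset.sum_congr rfl fun s hs => ?_
  have hsq : (Real.sqrt v)^(2*s) = (v:ℝ)^s := by
    rw [pow_mul, Real.sq_sqrt v.coe_nonneg]
  rw [hsq]
  have : 2*s/2 = s := by omega
  rw [this]
  push_cast
  ring

lemma claimB (k s : ℕ) :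
    (2*(k+s)).choose (2*k) * (D k * D s) = (k+s).choose k * D (k+s) := by
  have hfac : 0 < (k.factorial*2^k)*(s.factorial*2^s) := by positivity
  apply Nat.eq_of_mul_eq_mul_right hfac
  have c1 : (2*(k+s)).choose (2*k) * (2*k).factorial * (2*s).factorial
      = (2*(k+s)).factorial := by
    have := Nat.choose_mul_factorial_mul_factorial (show 2*k ≤ 2*(k+s) by omega)
    rw [show 2*(k+s) - 2*k = 2*s by omega] at this
    exact this
  have c2 : (k+s).choose k * k.factorial * s.factorial = (k+s).factorial := by
    have := Nat.choose_mul_factorial_mul_factorial (show k ≤ k+s by omega)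
    rw [show k+s - k = s by omega] at this
    exact this
  calc (2*(k+s)).choose (2*k) * (D k * D s) * ((k.factorial*2^k)*(s.factorial*2^s))
      = ((2*(k+s)).choose (2*k)) * (D k * (k.factorial*2^k)) * (D s * (s.factorial*2^s)) := by
        ring
    _ = (2*(k+s)).choose (2*k) * (2*k).factorial * (2*s).factorial := by
        rw [D_mul_fact, D_mul_fact]
    _ = (2*(k+s)).factorial := c1
    _ = D (k+s) * ((k+s).factorial * 2^(k+s)) := (D_mul_fact (k+s)).symm
    _ = D (k+s) * (((k+s).choose k * k.factorial * s.factorial) * 2^(k+s)) := by rw [c2]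
    _ = (k+s).choose k * D (k+s) * ((k.factorial*2^k)*(s.factorial*2^s)) := by
        rw [pow_add]; ring

lemma coeff_id {n k s : ℕ} (h : 2*(k+s) ≤ n) :
    n.choose (2*k) * D k * ((n-2*k).choose (2*s) * D s)
      = n.choose (2*(k+s)) * D (k+s) * (k+s).choose k := by
  have hA : n.choose (2*k) * (n-2*k).choose (2*s)
      = n.choose (2*(k+s)) * (2*(k+s)).choose (2*k) := by
    have h2 := Nat.choose_mul (n := n) (show 2*k ≤ 2*(k+s) by omega)
    rw [show 2*(k+s) - 2*k = 2*s by omega] at h2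
    exact h2.symm
  calc n.choose (2*k) * D k * ((n-2*k).choose (2*s) * D s)
      = (n.choose (2*k) * (n-2*k).choose (2*s)) * (D k * D s) := by ring
    _ = n.choose (2*(k+s)) * ((2*(k+s)).choose (2*k) * (D k * D s)) := by rw [hA]; ring
    _ = n.choose (2*(k+s)) * ((k+s).choose k * D (k+s)) := by rw [claimB]
    _ = _ := by ring

lemma alt_sum (t : ℕ) :
    ∑ k ∈ Finset.range (t+1), (-1:ℝ)^k * (t.choose k : ℝ)
      = if t = 0 then 1 else 0 := by
  have h := Int.alternating_sum_range_choose (n := t)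
  have h2 := congrArg (fun z : ℤ => (z : ℝ)) h
  push_cast at h2
  exact h2

lemma onedim (θ : ℝ) (v : ℝ≥0) (n : ℕ) :
    ∫ x, (∑ k ∈ Finset.range (n/2+1),
      ((n.choose (2*k) * ((2*k).factorial / (k.factorial * 2^k)) : ℕ) : ℝ)
        * (-1)^k * (v:ℝ)^k * x^(n-2*k)) ∂(gaussianReal θ v) = θ^n := by
  rw [integral_finset_sum _ (fun k _ =>
    ((integrable_pow_gauss θ v (n-2*k)).const_mul
      (((n.choose (2*k) * ((2*k).factorial / (k.factorial * 2^k)) : ℕ) : ℝ)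
        * (-1)^k * (v:ℝ)^k)))]
  simp_rw [mul_assoc]
  simp_rw [integral_const_mul]
  simp_rw [M_val θ v, Finset.mul_sum]
  have hsig := Finset.sum_sigma' (Finset.range (n/2+1))
    (fun k => Finset.range ((n-2*k)/2+1))
    (fun k s => (((n.choose (2*k) * ((2*k).factorial / (k.factorial * 2^k)) : ℕ) : ℝ))
      * ((-1)^k * ((v:ℝ)^k * ((((n-2*k).choose (2*s) * D s : ℕ) : ℝ)
          * (v:ℝ)^s * θ^(n-2*k-2*s)))))
  rw [hsig]
  have hstep : ∑ p ∈ (Finset.range (n/2+1)).sigma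
      (fun k => Finset.range ((n-2*k)/2+1)),
      (((n.choose (2*p.1) * ((2*p.1).factorial / (p.1.factorial * 2^p.1)) : ℕ) : ℝ))
        * ((-1)^p.1 * ((v:ℝ)^p.1 * ((((n-2*p.1).choose (2*p.2) * D p.2 : ℕ) : ℝ)
            * (v:ℝ)^p.2 * θ^(n-2*p.1-2*p.2))))
      = ∑ q ∈ (Finset.range (n/2+1)).sigma (fun t => Finset.range (t+1)),
          (-1:ℝ)^q.2 * ((q.1.choose q.2 : ℝ)
            * (((n.choose (2*q.1) * D q.1 : ℕ) : ℝ) * (v:ℝ)^q.1 * θ^(n-2*q.1))) := by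
    refine Finset.sum_nbij' (i := fun p => ⟨p.1 + p.2, p.1⟩)
      (j := fun q => ⟨q.2, q.1 - q.2⟩) ?_ ?_ ?_ ?_ ?_
    · rintro ⟨k, s⟩ h
      dsimp only
      simp only [Finset.mem_sigma, Finset.mem_range] at h ⊢
      omega
    · rintro ⟨t, k⟩ h
      dsimp only
      simp only [Finset.mem_sigma, Finset.mem_range] at h ⊢
      omega
    · rintro ⟨k, s⟩ h
      simp only [Finset.mem_sigma, Finset.mem_range] at h
      have e : k + s - k = s := by omega
      simp [e]
    · rintro ⟨t, k⟩ h
      simp only [Finset.mem_sigma, Finset.mem_range] at h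
      have e : k + (t - k) = t := by omega
      simp [e]
    · rintro ⟨k, s⟩ h
      dsimp only
      simp only [Finset.mem_sigma, Finset.mem_range] at h
      have hle : 2*(k+s) ≤ n := by omega
      have hc := coeff_id (n := n) (k := k) (s := s) hle
      have hcR : ((n.choose (2*k) : ℝ) * (D k : ℝ))
          * (((n-2*k).choose (2*s) : ℝ) * (D s : ℝ))
          = (n.choose (2*(k+s)) : ℝ) * (D (k+s) : ℝ) * ((k+s).choose k : ℝ) := by
        exact_mod_cast congrArg (fun z : ℕ => (z : ℝ)) hc
      push_cast [cast_div_eq_D]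
      rw [show n - 2*k - 2*s = n - 2*(k+s) by omega]
      linear_combination ((-1:ℝ)^k * (v:ℝ)^k * (v:ℝ)^s * θ^(n-2*(k+s))) * hcR
  rw [hstep]
  rw [Finset.sum_sigma (Finset.range (n/2+1)) (fun t => Finset.range (t+1))
    (fun q => (-1:ℝ)^q.2 * ((q.1.choose q.2 : ℝ)
      * (((n.choose (2*q.1) * D q.1 : ℕ) : ℝ) * (v:ℝ)^q.1 * θ^(n-2*q.1))))]
  have hinner : ∀ t, ∑ k ∈ Finset.range (t+1), (-1:ℝ)^k * ((t.choose k : ℝ)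
      * (((n.choose (2*t) * D t : ℕ) : ℝ) * (v:ℝ)^t * θ^(n-2*t)))
      = (if t = 0 then 1 else 0)
          * (((n.choose (2*t) * D t : ℕ) : ℝ) * (v:ℝ)^t * θ^(n-2*t)) := by
    intro t
    rw [← alt_sum t, Finset.sum_mul]
    exact Finset.sum_congr rfl fun k _ => by ring
  simp_rw [hinner, ite_mul, one_mul, zero_mul]
  rw [Finset.sum_ite_eq' (Finset.range (n/2+1)) 0]
  simp [D]

lemma integral_pi_prod : ∀ {n : ℕ} (μ : Fin n → Measure ℝ),
    (∀ i, IsProbabilityMeasure (μ i)) → ∀ (f : Fin n → ℝ → ℝ),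
    ∫ x : Fin n → ℝ, ∏ i, f i (x i) ∂(Measure.pi μ) = ∏ i, ∫ x, f i x ∂(μ i) := by
  intro n
  induction n with
  | zero =>
      intro μ hμ f
      haveI := hμ
      simp only [Finset.univ_eq_empty, Finset.prod_empty]
      rw [integral_const]
      simp
  | succ n ih =>
      intro μ hμ f
      haveI := hμ
      haveI : ∀ i, SigmaFinite (μ i) := fun i => inferInstance
      calc
        ∫ x : Fin (n+1) → ℝ, ∏ i, f i (x i) ∂(Measure.pi μ)
            = ∫ p : ℝ × (Fin n → ℝ), f 0 p.1 * ∏ i : Fin n, f i.succ (p.2 i)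
              ∂((μ 0).prod (Measure.pi fun i => μ i.succ)) := by
          rw [← ((measurePreserving_piFinSuccAbove μ 0).symm).integral_comp']
          simp_rw [MeasurableEquiv.piFinSuccAbove_symm_apply, Fin.insertNthEquiv,
            Fin.prod_univ_succ, Fin.insertNth_zero, Equiv.coe_fn_mk, Fin.cons_succ,
            Fin.zero_succAbove, cast_eq, Fin.cons_zero]
        _ = (∫ x, f 0 x ∂(μ 0)) * ∏ i : Fin n, ∫ x, f i.succ x ∂(μ i.succ) := by
          rw [integral_prod_mul (f := f 0) (g := fun y : Fin n → ℝ => ∏ i : Fin n, f i.succ (y i))]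
          rw [ih (fun i => μ i.succ) (fun i => hμ i.succ) (fun i => f i.succ)]
        _ = ∏ i, ∫ x, f i x ∂(μ i) :=
          (Fin.prod_univ_succ (fun i => ∫ x, f i x ∂(μ i))).symm

end Debias
end
end Debias

/-- Multivariate debiasing identity (isotropic covariance): for an observation
`X = θ + ε` whose coordinates are independent `N(θ j, v)`, the debiased monomial
statistic `∏_j ∑_k C_{a j, k} (-1)^k v^k (X j)^(a j - 2k)` is an unbiased estimator
of the monomial `∏_j (θ j)^(a j)`, where `C_{K,k} = (K choose 2k) (2k)!/(k! 2^k)`. -/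
theorem debiased_monomial_unbiased (d : ℕ) (θ : Fin d → ℝ) (v : ℝ≥0) (a : Fin d → ℕ) :
    ∫ x : Fin d → ℝ,
        (∏ j : Fin d, ∑ k ∈ Finset.range (a j / 2 + 1),
          (((a j).choose (2 * k) * ((2 * k).factorial / (k.factorial * 2 ^ k)) : ℕ) : ℝ)
            * (-1) ^ k * (v : ℝ) ^ k * (x j) ^ (a j - 2 * k))
        ∂(Measure.pi fun j : Fin d => gaussianReal (θ j) v)
      = ∏ j : Fin d, (θ j) ^ (a j) := by
  have h := Debias.integral_pi_prod (fun j => gaussianReal (θ j) v)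
    (fun j => inferInstance)
    (fun j y => ∑ k ∈ Finset.range (a j / 2 + 1),
      (((a j).choose (2 * k) * ((2 * k).factorial / (k.factorial * 2 ^ k)) : ℕ) : ℝ)
        * (-1) ^ k * (v : ℝ) ^ k * y ^ (a j - 2 * k))
  exact h.trans (Finset.prod_congr rfl fun j _ => Debias.onedim (θ j) v (a j))
end

section
/- Let (Ω, 𝓕, ℙ) be a probability space, v ≥ 0 a variance, and K ∈ ℕ. Let (θᵢ, εᵢ)_{i ∈ ℕ} be an i.i.d. sequence of pairs of real random variables such that ε₀ is independent of θ₀, ε₀ has law gaussianReal 0 v, and E[|θ₀|^K] < ∞. Set Xᵢ := θᵢ + εᵢ and define C_{K,j} := (K.choose (2*j)) * ((2*j)! / (j! * 2^j)). Then, ℙ-almost surely, (1/n) Σ_{i=0}^{n−1} Σ_{j=0}^{⌊K/2⌋} C_{K,j} * (−1)^j * v^j * Xᵢ^(K−2*j) → E[θ₀^K] as n → ∞. -/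
open MeasureTheory ProbabilityTheory Filter
open scoped NNReal ENNReal

section Aux

/-! ### Combinatorial auxiliary lemmas -/

/-- `dbl n = (2n-1)!! = (2n)!/(n! 2^n)` -/
def dbl (n : ℕ) : ℕ := Nat.doubleFactorial (2 * n - 1)

lemma dbl_succ (n : ℕ) : dbl (n + 1) = (2 * n + 1) * dbl n := by
  show Nat.doubleFactorial (2 * (n+1) - 1) = (2 * n + 1) * Nat.doubleFactorial (2 * n - 1)
  have h : 2 * (n+1) - 1 = 2 * n + 1 := by omega
  rw [h, Nat.doubleFactorial_add_one]

lemma dbl_mul (n : ℕ) : dbl n * (n.factorial * 2 ^ n) = (2 * n).factorial := by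
  induction n with
  | zero => rfl
  | succ n ih =>
      have h2 : 2 * (n + 1) = 2 * n + 1 + 1 := by ring
      rw [dbl_succ, h2, Nat.factorial_succ, Nat.factorial_succ, Nat.factorial_succ, ← ih]
      ring

lemma dbl_div (n : ℕ) : (2 * n).factorial / (n.factorial * 2 ^ n) = dbl n := by
  rw [← dbl_mul, Nat.mul_div_cancel]
  positivity

lemma key_id {K s j : ℕ} (hj : j ≤ s) (hs : 2 * s ≤ K) :
    K.choose (2 * j) * dbl j * ((K - 2 * j).choose (2 * (s - j)) * dbl (s - j))
      = K.choose (2 * s) * dbl s * s.choose j := by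
  have h2j : 2 * j ≤ K := by omega
  have h2sj : 2 * (s - j) ≤ K - 2 * j := by omega
  set M := j.factorial * 2 ^ j * ((s - j).factorial * 2 ^ (s - j)) * (K - 2 * s).factorial with hM
  apply Nat.eq_of_mul_eq_mul_right (show 0 < M by rw [hM]; positivity)
  have e1 : K - 2 * j - 2 * (s - j) = K - 2 * s := by omega
  have hA : K.choose (2 * j) * dbl j * ((K - 2 * j).choose (2 * (s - j)) * dbl (s - j)) * M
      = K.factorial := by
    have c1 : dbl j * (j.factorial * 2 ^ j) = (2 * j).factorial := dbl_mul j
    have c2 : dbl (s - j) * ((s - j).factorial * 2 ^ (s - j)) = (2 * (s - j)).factorial :=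
      dbl_mul (s - j)
    have c3 : (K - 2 * j).choose (2 * (s - j)) * (2 * (s - j)).factorial *
        (K - 2 * s).factorial = (K - 2 * j).factorial := by
      rw [← e1]; exact Nat.choose_mul_factorial_mul_factorial h2sj
    have c4 : K.choose (2 * j) * (2 * j).factorial * (K - 2 * j).factorial = K.factorial :=
      Nat.choose_mul_factorial_mul_factorial h2j
    calc K.choose (2 * j) * dbl j * ((K - 2 * j).choose (2 * (s - j)) * dbl (s - j)) * M
        = K.choose (2*j) * (dbl j * (j.factorial * 2 ^ j)) *
            ((K - 2*j).choose (2*(s-j)) * (dbl (s-j) * ((s-j).factorial * 2 ^ (s-j))) *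
              (K - 2*s).factorial) := by rw [hM]; ring
      _ = K.choose (2*j) * (2*j).factorial *
            ((K - 2*j).choose (2*(s-j)) * (2*(s-j)).factorial * (K - 2*s).factorial) := by
          rw [c1, c2]
      _ = K.factorial := by rw [c3, c4]
  have hB : K.choose (2 * s) * dbl s * s.choose j * M = K.factorial := by
    have h1 : s.choose j * j.factorial * (s - j).factorial = s.factorial :=
      Nat.choose_mul_factorial_mul_factorial hj
    have h2 : dbl s * (s.factorial * 2 ^ s) = (2 * s).factorial := dbl_mul s
    have h3 : K.choose (2 * s) * (2 * s).factorial * (K - 2 * s).factorial = K.factorial :=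
      Nat.choose_mul_factorial_mul_factorial hs
    have hp : (2:ℕ) ^ j * 2 ^ (s - j) = 2 ^ s := by
      rw [← pow_add]; congr 1; omega
    calc K.choose (2 * s) * dbl s * s.choose j * M
        = K.choose (2*s) * (dbl s * ((s.choose j * j.factorial * (s-j).factorial) *
            (2 ^ j * 2 ^ (s-j)))) * (K - 2*s).factorial := by rw [hM]; ring
      _ = K.choose (2*s) * (dbl s * (s.factorial * 2 ^ s)) * (K - 2*s).factorial := by
          rw [h1, hp]
      _ = K.factorial := by rw [h2, h3]
  rw [hA, hB]

/-! ### Gaussian moments -/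

lemma integrable_pow_mul_exp {b : ℝ} (hb : 0 < b) (m : ℕ) :
    Integrable (fun x : ℝ => x ^ m * Real.exp (-b * x ^ 2)) := by
  have := integrable_rpow_mul_exp_neg_mul_sq hb (s := (m : ℝ))
    (lt_of_lt_of_le neg_one_lt_zero (Nat.cast_nonneg m))
  simpa [Real.rpow_natCast] using this

lemma J_one {b : ℝ} (hb : 0 < b) : ∫ x : ℝ, x * Real.exp (-b * x ^ 2) = 0 := by
  have hderiv : ∀ x : ℝ, HasDerivAt (fun x : ℝ => -(2 * b)⁻¹ * Real.exp (-b * x ^ 2))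
      (x * Real.exp (-b * x ^ 2)) x := by
    intro x
    have h1 : HasDerivAt (fun x : ℝ => -b * x ^ 2) (-b * (2 * x)) x := by
      simpa using ((hasDerivAt_pow 2 x).const_mul (-b))
    have h2 := (h1.exp).const_mul (-(2 * b)⁻¹)
    refine h2.congr_deriv ?_
    field_simp
  have hint : Integrable (fun x : ℝ => x * Real.exp (-b * x ^ 2)) := by
    simpa using integrable_pow_mul_exp hb 1
  have hf : Integrable (fun x : ℝ => -(2 * b)⁻¹ * Real.exp (-b * x ^ 2)) :=
    (integrable_exp_neg_mul_sq hb).const_mul _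
  exact integral_eq_zero_of_hasDerivAt_of_integrable hderiv hint hf

lemma J_rec {b : ℝ} (hb : 0 < b) (m : ℕ) :
    ∫ x : ℝ, x ^ (m + 2) * Real.exp (-b * x ^ 2)
      = ((m : ℝ) + 1) / (2 * b) * ∫ x : ℝ, x ^ m * Real.exp (-b * x ^ 2) := by
  set f : ℝ → ℝ := fun x => x ^ (m + 1) * Real.exp (-b * x ^ 2) with hf
  set f' : ℝ → ℝ := fun x => ((m : ℝ) + 1) * (x ^ m * Real.exp (-b * x ^ 2))
      - 2 * b * (x ^ (m + 2) * Real.exp (-b * x ^ 2)) with hf'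
  have hderiv : ∀ x : ℝ, HasDerivAt f (f' x) x := by
    intro x
    have h1 : HasDerivAt (fun x : ℝ => -b * x ^ 2) (-b * (2 * x)) x := by
      simpa using ((hasDerivAt_pow 2 x).const_mul (-b))
    have h2 := (hasDerivAt_pow (m + 1) x).mul h1.exp
    refine h2.congr_deriv ?_
    simp [hf']
    ring
  have hint' : Integrable f' :=
    ((integrable_pow_mul_exp hb m).const_mul _).sub
      ((integrable_pow_mul_exp hb (m + 2)).const_mul _)
  have hintf : Integrable f := integrable_pow_mul_exp hb (m + 1)
  have h0 : ∫ x, f' x = 0 := integral_eq_zero_of_hasDerivAt_of_integrable hderiv hint' hintf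
  rw [hf', integral_sub ((integrable_pow_mul_exp hb m).const_mul _)
      ((integrable_pow_mul_exp hb (m + 2)).const_mul _),
    MeasureTheory.integral_const_mul, MeasureTheory.integral_const_mul] at h0
  have hb' : (2 : ℝ) * b ≠ 0 := by positivity
  rw [div_mul_eq_mul_div, eq_div_iff hb']
  linarith [h0]

variable {v : ℝ≥0}

lemma gaussianPDFReal_eq (v : ℝ≥0) (x : ℝ) :
    gaussianPDFReal 0 v x
      = (Real.sqrt (2 * Real.pi * v))⁻¹ * Real.exp (-(2 * v : ℝ)⁻¹ * x ^ 2) := by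
  show (Real.sqrt (2 * Real.pi * v))⁻¹ * Real.exp (- (x - 0)^2 / (2 * (v:ℝ))) = _
  have h : - (x - 0)^2 / (2 * (v:ℝ)) = -(2 * (v:ℝ))⁻¹ * x ^ 2 := by
    rw [sub_zero]; ring
  rw [h]

lemma integral_fun_gaussianReal (hv : v ≠ 0) (g : ℝ → ℝ) :
    ∫ x, g x ∂(gaussianReal 0 v) = ∫ x, gaussianPDFReal 0 v x * g x := by
  rw [gaussianReal_of_var_ne_zero 0 hv]
  have h1 : (gaussianPDF 0 v) = fun x => ((gaussianPDFReal 0 v x).toNNReal : ℝ≥0∞) := rfl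
  rw [h1, integral_withDensity_eq_integral_smul
    ((measurable_gaussianPDFReal 0 v).real_toNNReal) g]
  congr 1
  funext x
  rw [NNReal.smul_def, Real.coe_toNNReal _ (gaussianPDFReal_nonneg 0 v x), smul_eq_mul]

lemma integrable_pow_gaussianReal (v : ℝ≥0) (m : ℕ) :
    Integrable (fun x : ℝ => x ^ m) (gaussianReal 0 v) := by
  rcases eq_or_ne v 0 with rfl | hv
  · rw [gaussianReal_zero_var]
    exact (integrable_const _).congr (ae_eq_dirac fun x : ℝ => x ^ m).symm
  · rw [gaussianReal_of_var_ne_zero 0 hv]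
    have h1 : (gaussianPDF 0 v) = fun x => ((gaussianPDFReal 0 v x).toNNReal : ℝ≥0∞) := rfl
    rw [h1, integrable_withDensity_iff_integrable_smul
      ((measurable_gaussianPDFReal 0 v).real_toNNReal)]
    have hv' : (0:ℝ) < (v:ℝ) := NNReal.coe_pos.mpr (pos_iff_ne_zero.mpr hv)
    have hb : (0 : ℝ) < (2 * v : ℝ)⁻¹ := by positivity
    have := (integrable_pow_mul_exp hb m).const_mul (Real.sqrt (2 * Real.pi * v))⁻¹
    apply this.congr
    filter_upwards with x
    rw [NNReal.smul_def, Real.coe_toNNReal _ (gaussianPDFReal_nonneg 0 v x), smul_eq_mul,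
      gaussianPDFReal_eq]
    ring

lemma moment_eq (hv : v ≠ 0) (m : ℕ) :
    ∫ x, x ^ m ∂(gaussianReal 0 v)
      = (Real.sqrt (2 * Real.pi * v))⁻¹ * ∫ x, x ^ m * Real.exp (-(2 * v : ℝ)⁻¹ * x ^ 2) := by
  rw [integral_fun_gaussianReal hv fun x => x ^ m]
  rw [← MeasureTheory.integral_const_mul]
  congr 1
  funext x
  rw [gaussianPDFReal_eq]
  ring

lemma gaussianReal_moment_rec (v : ℝ≥0) (m : ℕ) :
    ∫ x, x ^ (m + 2) ∂(gaussianReal 0 v)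
      = ((m : ℝ) + 1) * v * ∫ x, x ^ m ∂(gaussianReal 0 v) := by
  rcases eq_or_ne v 0 with rfl | hv
  · rw [gaussianReal_zero_var, integral_dirac]
    simp
  · have hv' : (0:ℝ) < (v:ℝ) := NNReal.coe_pos.mpr (pos_iff_ne_zero.mpr hv)
    have hb : (0 : ℝ) < (2 * v : ℝ)⁻¹ := by positivity
    rw [moment_eq hv, moment_eq hv, J_rec hb m]
    have h2b : ((m:ℝ) + 1) / (2 * (2 * (v:ℝ))⁻¹) = ((m:ℝ) + 1) * v := by
      rw [div_eq_iff (by positivity)]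
      field_simp
    rw [← mul_assoc, mul_comm ((Real.sqrt (2 * Real.pi * v))⁻¹), mul_assoc, ← h2b]

lemma gaussianReal_moment_one (v : ℝ≥0) : ∫ x, x ^ 1 ∂(gaussianReal 0 v) = 0 := by
  rcases eq_or_ne v 0 with rfl | hv
  · rw [gaussianReal_zero_var, integral_dirac]; simp
  · have hv' : (0:ℝ) < (v:ℝ) := NNReal.coe_pos.mpr (pos_iff_ne_zero.mpr hv)
    have hb : (0 : ℝ) < (2 * v : ℝ)⁻¹ := by positivity
    rw [moment_eq hv]
    have := J_one hb
    simp only [pow_one]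
    rw [this, mul_zero]

lemma gaussianReal_moment_even (v : ℝ≥0) (l : ℕ) :
    ∫ x, x ^ (2 * l) ∂(gaussianReal 0 v) = (dbl l : ℝ) * (v : ℝ) ^ l := by
  induction l with
  | zero => simp [dbl]
  | succ l ih =>
      have h : 2 * (l + 1) = 2 * l + 2 := by ring
      rw [h, gaussianReal_moment_rec, ih, dbl_succ]
      push_cast
      ring

lemma gaussianReal_moment_odd (v : ℝ≥0) (l : ℕ) :
    ∫ x, x ^ (2 * l + 1) ∂(gaussianReal 0 v) = 0 := by
  induction l with
  | zero => simpa using gaussianReal_moment_one v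
  | succ l ih =>
      have h : 2 * (l + 1) + 1 = (2 * l + 1) + 2 := by ring
      rw [h, gaussianReal_moment_rec, ih, mul_zero]

/-! ### The combinatorial core identity -/

lemma sum_even_support (m : ℕ) (f : ℕ → ℝ) (hf : ∀ u, Odd u → f u = 0) :
    ∑ u ∈ Finset.range (m + 1), f u = ∑ l ∈ Finset.range (m / 2 + 1), f (2 * l) := by
  have himg := Finset.sum_image (s := Finset.range (m / 2 + 1)) (f := f)
    (g := fun l => 2 * l)
    (fun x _ y _ h => Nat.eq_of_mul_eq_mul_left (by norm_num) h)
  rw [← himg]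
  apply (Finset.sum_subset ?_ ?_).symm
  · intro u hu
    simp only [Finset.mem_image, Finset.mem_range] at *
    obtain ⟨l, hl, rfl⟩ := hu
    omega
  · intro u hu hnot
    apply hf
    simp only [Finset.mem_image, Finset.mem_range] at hu hnot
    rcases Nat.even_or_odd u with he | ho
    · obtain ⟨l, rfl⟩ := he
      exact absurd ⟨l, by omega, by ring⟩ hnot
    · exact ho

lemma alg (K : ℕ) (w : ℝ) (T M : ℕ → ℝ)
    (hModd : ∀ u, Odd u → M u = 0) (hMeven : ∀ l, M (2 * l) = (dbl l : ℝ) * w ^ l) :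
    ∑ j ∈ Finset.range (K / 2 + 1), ((K.choose (2 * j) * dbl j : ℕ) : ℝ) * (-1) ^ j * w ^ j *
      ∑ u ∈ Finset.range (K - 2 * j + 1), ((K - 2 * j).choose u : ℝ) * M u * T (K - 2 * j - u)
    = T K := by
  set n := K / 2 + 1 with hn
  set F : ℕ → ℕ → ℝ := fun j l =>
    ((K.choose (2 * j) * dbl j : ℕ) : ℝ) * (-1) ^ j * w ^ j *
      (((K - 2 * j).choose (2 * l) : ℝ) * ((dbl l : ℝ) * w ^ l) * T (K - 2 * j - 2 * l)) with hF
  have step1 : ∀ j ∈ Finset.range n,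
      ((K.choose (2 * j) * dbl j : ℕ) : ℝ) * (-1) ^ j * w ^ j *
        ∑ u ∈ Finset.range (K - 2 * j + 1), ((K - 2 * j).choose u : ℝ) * M u * T (K - 2 * j - u)
      = ∑ l ∈ Finset.range n, F j l := by
    intro j hj
    rw [Finset.mem_range] at hj
    rw [sum_even_support (K - 2 * j)
      (fun u => ((K - 2 * j).choose u : ℝ) * M u * T (K - 2 * j - u))
      (fun u hu => by
        show ((K - 2 * j).choose u : ℝ) * M u * T (K - 2 * j - u) = 0
        rw [hModd u hu]; ring)]
    have hsub : Finset.range ((K - 2 * j) / 2 + 1) ⊆ Finset.range n := by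
      intro l hl
      rw [Finset.mem_range] at *
      omega
    rw [Finset.mul_sum]
    rw [← Finset.sum_subset hsub (fun l hl hnl => ?_)]
    · apply Finset.sum_congr rfl
      intro l hl
      simp only [hF]
      rw [hMeven l]
      try ring
    · rw [Finset.mem_range] at hl hnl
      have : K - 2 * j < 2 * l := by omega
      simp only [hF]
      rw [Nat.choose_eq_zero_of_lt this]
      push_cast
      ring
  rw [Finset.sum_congr rfl step1]
  have step2 : ∀ j ∈ Finset.range n, ∑ l ∈ Finset.range n, F j l
      = ∑ l ∈ Finset.range (n - j), F j l := by
    intro j hj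
    rw [Finset.mem_range] at hj
    apply (Finset.sum_subset (fun l hl => by rw [Finset.mem_range] at *; omega)
      (fun l hl hnl => ?_)).symm
    rw [Finset.mem_range] at hl hnl
    have : K - 2 * j < 2 * l := by omega
    simp only [hF]
    rw [Nat.choose_eq_zero_of_lt this]
    push_cast
    ring
  rw [Finset.sum_congr rfl step2, ← Finset.sum_range_diag_flip n F]
  have step3 : ∀ s ∈ Finset.range n, ∑ k ∈ Finset.range (s + 1), F k (s - k)
      = if s = 0 then T K else 0 := by
    intro s hs
    rw [Finset.mem_range, hn] at hs
    have h2s : 2 * s ≤ K := by omega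
    have hterm : ∀ k ∈ Finset.range (s + 1), F k (s - k)
        = ((K.choose (2 * s) * dbl s : ℕ) : ℝ) * w ^ s * T (K - 2 * s) *
            ((-1) ^ k * (s.choose k : ℕ)) := by
      intro k hk
      rw [Finset.mem_range] at hk
      have hk' : k ≤ s := by omega
      simp only [hF]
      have e1 : K - 2 * k - 2 * (s - k) = K - 2 * s := by omega
      have e2 : (w : ℝ) ^ k * w ^ (s - k) = w ^ s := by
        rw [← pow_add]
        congr 1
        omega
      have hkey := key_id hk' h2s
      calc ((K.choose (2 * k) * dbl k : ℕ) : ℝ) * (-1) ^ k * w ^ k *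
            (((K - 2 * k).choose (2 * (s - k)) : ℝ) * ((dbl (s - k) : ℝ) * w ^ (s - k)) *
              T (K - 2 * k - 2 * (s - k)))
          = ((K.choose (2 * k) * dbl k * ((K - 2 * k).choose (2 * (s - k)) * dbl (s - k)) : ℕ) : ℝ)
              * (-1) ^ k * (w ^ k * w ^ (s - k)) * T (K - 2 * k - 2 * (s - k)) := by
            push_cast
            ring
        _ = ((K.choose (2 * s) * dbl s * s.choose k : ℕ) : ℝ)
              * (-1) ^ k * w ^ s * T (K - 2 * s) := by rw [hkey, e1, e2]
        _ = ((K.choose (2 * s) * dbl s : ℕ) : ℝ) * w ^ s * T (K - 2 * s) *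
              ((-1) ^ k * (s.choose k : ℕ)) := by push_cast; ring
    rw [Finset.sum_congr rfl hterm, ← Finset.mul_sum]
    have halt : ∑ k ∈ Finset.range (s + 1), ((-1 : ℝ) ^ k * (s.choose k : ℕ))
        = if s = 0 then 1 else 0 := by
      have h1 := @Int.alternating_sum_range_choose s
      have h2 : ((∑ i ∈ Finset.range (s + 1), (-1 : ℤ) ^ i * s.choose i : ℤ) : ℝ)
          = ∑ k ∈ Finset.range (s + 1), ((-1 : ℝ) ^ k * (s.choose k : ℕ)) := by
        push_cast
        rfl
      rw [← h2, h1]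
      split_ifs <;> simp
    rw [halt]
    rcases eq_or_ne s 0 with rfl | hs0
    · simp [dbl, Nat.doubleFactorial]
    · rw [if_neg hs0, if_neg hs0, mul_zero]
  rw [Finset.sum_congr rfl step3, Finset.sum_ite_eq' (Finset.range n) 0 (fun _ => T K)]
  rw [if_pos (Finset.mem_range.mpr (by omega))]

end Aux


open MeasureTheory ProbabilityTheory Filter
open scoped NNReal

/-- Almost-sure consistency of the debiased empirical moments in the i.i.d. scalar setting:
if `(θᵢ, εᵢ)` is an i.i.d. sequence with `ε₀ ~ N(0, v)` independent of `θ₀` and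
`E[|θ₀|^K] < ∞`, then with `Xᵢ = θᵢ + εᵢ` the debiased empirical `K`-th moment
`(1/n) ∑_{i<n} ∑_j C_{K,j} (-1)^j v^j Xᵢ^(K-2j)` converges almost surely to `E[θ₀^K]`. -/
theorem debiased_moment_slln
    {Ω : Type*} [MeasurableSpace Ω] (μ : Measure Ω) [IsProbabilityMeasure μ]
    (v : ℝ≥0) (K : ℕ) (θ ε : ℕ → Ω → ℝ)
    (hmeas : ∀ i, Measurable fun ω => (θ i ω, ε i ω))
    (hindep : iIndepFun (fun i ω => (θ i ω, ε i ω)) μ)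
    (hident : ∀ i : ℕ,
      IdentDistrib (fun ω => (θ i ω, ε i ω)) (fun ω => (θ 0 ω, ε 0 ω)) μ μ)
    (hindep0 : IndepFun (θ 0) (ε 0) μ)
    (hlaw : Measure.map (ε 0) μ = gaussianReal 0 v)
    (hint : Integrable (fun ω => |θ 0 ω| ^ K) μ) :
    ∀ᵐ ω ∂μ, Tendsto
      (fun n : ℕ => (1 / (n : ℝ)) * ∑ i ∈ Finset.range n,
        ∑ j ∈ Finset.range (K / 2 + 1),
          ((K.choose (2 * j) * ((2 * j).factorial / (j.factorial * 2 ^ j)) : ℕ) : ℝ)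
            * (-1) ^ j * (v : ℝ) ^ j * (θ i ω + ε i ω) ^ (K - 2 * j))
      atTop (nhds (∫ ω, (θ 0 ω) ^ K ∂μ)) := by
  classical
  -- measurability of the coordinates
  have θm : ∀ i, Measurable (θ i) := fun i => measurable_fst.comp (hmeas i)
  have εm : ∀ i, Measurable (ε i) := fun i => measurable_snd.comp (hmeas i)
  -- the coefficients
  set c : ℕ → ℝ := fun j =>
    ((K.choose (2 * j) * ((2 * j).factorial / (j.factorial * 2 ^ j)) : ℕ) : ℝ)
      * (-1) ^ j * (v : ℝ) ^ j with hc
  -- integrability of powers of θ 0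
  have hθint : ∀ m, m ≤ K → Integrable (fun ω => θ 0 ω ^ m) μ := by
    intro m hm
    apply Integrable.mono' ((integrable_const (1 : ℝ)).add hint)
      (((θm 0).pow_const m).aestronglyMeasurable)
    filter_upwards with ω
    show ‖θ 0 ω ^ m‖ ≤ 1 + |θ 0 ω| ^ K
    rw [Real.norm_eq_abs, abs_pow]
    rcases le_or_gt (|θ 0 ω|) 1 with h1 | h1
    · have h2 : |θ 0 ω| ^ m ≤ 1 := pow_le_one₀ (abs_nonneg _) h1
      have h3 : (0:ℝ) ≤ |θ 0 ω| ^ K := by positivity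
      linarith
    · have h2 : |θ 0 ω| ^ m ≤ |θ 0 ω| ^ K := pow_le_pow_right₀ h1.le hm
      linarith
  -- integrability of powers of ε 0
  have hεint : ∀ m : ℕ, Integrable (fun ω => ε 0 ω ^ m) μ := by
    intro m
    have hg : AEStronglyMeasurable (fun x : ℝ => x ^ m) (Measure.map (ε 0) μ) :=
      (measurable_id'.pow_const m).aestronglyMeasurable
    exact (integrable_map_measure hg (εm 0).aemeasurable).mp
      (by rw [hlaw]; exact integrable_pow_gaussianReal v m)
  -- moments of ε 0
  have hεmom : ∀ m : ℕ, ∫ ω, ε 0 ω ^ m ∂μ = ∫ x, x ^ m ∂(gaussianReal 0 v) := by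
    intro m
    rw [← hlaw, integral_map (εm 0).aemeasurable
      (measurable_id'.pow_const m).aestronglyMeasurable]
  -- independence of powers
  have hip : ∀ a b : ℕ, IndepFun (fun ω => θ 0 ω ^ a) (fun ω => ε 0 ω ^ b) μ := fun a b =>
    hindep0.comp (measurable_id.pow_const a) (measurable_id.pow_const b)
  -- integrability of powers of θ 0 + ε 0
  have hXint : ∀ m, m ≤ K → Integrable (fun ω => (θ 0 ω + ε 0 ω) ^ m) μ := by
    intro m hm
    have hexp : (fun ω => (θ 0 ω + ε 0 ω) ^ m)
        = fun ω => ∑ u ∈ Finset.range (m + 1),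
            ε 0 ω ^ u * θ 0 ω ^ (m - u) * (m.choose u : ℝ) := by
      funext ω
      rw [add_comm (θ 0 ω), add_pow]
    rw [hexp]
    apply integrable_finset_sum
    intro u hu
    rw [Finset.mem_range] at hu
    have hmu : m - u ≤ K := by omega
    have := ((hip (m - u) u).integrable_mul (hθint _ hmu) (hεint u)).mul_const
      ((m.choose u : ℝ))
    apply this.congr
    filter_upwards with ω
    show θ 0 ω ^ (m - u) * ε 0 ω ^ u * (m.choose u : ℝ) = _
    ring
  -- moments of θ 0 + ε 0
  have hXmom : ∀ m, m ≤ K →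
      ∫ ω, (θ 0 ω + ε 0 ω) ^ m ∂μ
        = ∑ u ∈ Finset.range (m + 1), ((m.choose u : ℕ) : ℝ)
            * (∫ x, x ^ u ∂(gaussianReal 0 v)) * ∫ ω, θ 0 ω ^ (m - u) ∂μ := by
    intro m hm
    have hexp : (fun ω => (θ 0 ω + ε 0 ω) ^ m)
        = fun ω => ∑ u ∈ Finset.range (m + 1),
            ε 0 ω ^ u * θ 0 ω ^ (m - u) * (m.choose u : ℝ) := by
      funext ω
      rw [add_comm (θ 0 ω), add_pow]
    have hti : ∀ u ∈ Finset.range (m + 1),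
        Integrable (fun ω => ε 0 ω ^ u * θ 0 ω ^ (m - u) * (m.choose u : ℝ)) μ := by
      intro u hu
      rw [Finset.mem_range] at hu
      have hmu : m - u ≤ K := by omega
      have := ((hip (m - u) u).integrable_mul (hθint _ hmu) (hεint u)).mul_const
        ((m.choose u : ℝ))
      apply this.congr
      filter_upwards with ω
      show θ 0 ω ^ (m - u) * ε 0 ω ^ u * (m.choose u : ℝ) = _
      ring
    rw [hexp, integral_finset_sum _ hti]
    apply Finset.sum_congr rfl
    intro u hu
    rw [Finset.mem_range] at hu
    have hmu : m - u ≤ K := by omega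
    have h1 : (fun ω => ε 0 ω ^ u * θ 0 ω ^ (m - u) * (m.choose u : ℝ))
        = fun ω => θ 0 ω ^ (m - u) * ε 0 ω ^ u * (m.choose u : ℝ) := by
      funext ω; ring
    rw [h1, MeasureTheory.integral_mul_const]
    have h2 := (hip (m - u) u).integral_fun_mul_eq_mul_integral (hθint _ hmu).aestronglyMeasurable
      (hεint u).aestronglyMeasurable
    have h3 : ∫ ω, θ 0 ω ^ (m - u) * ε 0 ω ^ u ∂μ
        = (∫ ω, θ 0 ω ^ (m - u) ∂μ) * ∫ ω, ε 0 ω ^ u ∂μ := h2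
    rw [h3, hεmom u]
    ring
  -- the transformed sequence
  set g : ℝ × ℝ → ℝ :=
    fun p => ∑ j ∈ Finset.range (K / 2 + 1), c j * (p.1 + p.2) ^ (K - 2 * j) with hg
  have hgm : Measurable g :=
    Finset.measurable_sum _ fun j _ =>
      (((measurable_fst.add measurable_snd).pow_const _).const_mul _)
  set Y : ℕ → Ω → ℝ := fun i => g ∘ fun ω => (θ i ω, ε i ω) with hY
  have hYi : ∀ i, Y i = fun ω =>
      ∑ j ∈ Finset.range (K / 2 + 1), c j * (θ i ω + ε i ω) ^ (K - 2 * j) := fun i => rfl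
  have hYint : Integrable (Y 0) μ := by
    rw [hYi 0]
    apply integrable_finset_sum
    intro j hj
    exact (hXint (K - 2 * j) (by omega)).const_mul (c j)
  have hYindep : Pairwise (Function.onFun (IndepFun · · μ) Y) := fun i j hij =>
    (hindep.indepFun hij).comp hgm hgm
  have hYident : ∀ i, IdentDistrib (Y i) (Y 0) μ μ := fun i => (hident i).comp hgm
  have hslln := strong_law_ae_real Y hYint hYindep hYident
  -- identification of the limit
  have hE : ∫ ω, Y 0 ω ∂μ = ∫ ω, θ 0 ω ^ K ∂μ := by
    have h1 : ∫ ω, Y 0 ω ∂μ = ∑ j ∈ Finset.range (K / 2 + 1),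
        c j * ∫ ω, (θ 0 ω + ε 0 ω) ^ (K - 2 * j) ∂μ := by
      rw [hYi 0, integral_finset_sum _ fun j hj =>
        (hXint (K - 2 * j) (by omega)).const_mul (c j)]
      exact Finset.sum_congr rfl fun j _ => MeasureTheory.integral_const_mul _ _
    rw [h1]
    have h2 : ∀ j ∈ Finset.range (K / 2 + 1),
        c j * ∫ ω, (θ 0 ω + ε 0 ω) ^ (K - 2 * j) ∂μ
        = ((K.choose (2 * j) * dbl j : ℕ) : ℝ) * (-1) ^ j * (v : ℝ) ^ j *
            ∑ u ∈ Finset.range (K - 2 * j + 1), ((K - 2 * j).choose u : ℝ)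
              * (∫ x, x ^ u ∂(gaussianReal 0 v)) * ∫ ω, θ 0 ω ^ (K - 2 * j - u) ∂μ := by
      intro j hj
      rw [Finset.mem_range] at hj
      rw [hXmom (K - 2 * j) (by omega), hc]
      simp only [dbl_div]
    rw [Finset.sum_congr rfl h2]
    exact alg K (v : ℝ) (fun a => ∫ ω, θ 0 ω ^ a ∂μ) (fun u => ∫ x, x ^ u ∂(gaussianReal 0 v))
      (fun u hu => by
        obtain ⟨l, rfl⟩ := hu
        exact gaussianReal_moment_odd v l)
      (fun l => gaussianReal_moment_even v l)
  filter_upwards [hslln] with ω hω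
  have hfun : (fun n : ℕ => (1 / (n : ℝ)) * ∑ i ∈ Finset.range n,
      ∑ j ∈ Finset.range (K / 2 + 1),
        ((K.choose (2 * j) * ((2 * j).factorial / (j.factorial * 2 ^ j)) : ℕ) : ℝ)
          * (-1) ^ j * (v : ℝ) ^ j * (θ i ω + ε i ω) ^ (K - 2 * j))
      = fun n : ℕ => (∑ i ∈ Finset.range n, Y i ω) / n := by
    have hterm : ∀ i, (∑ j ∈ Finset.range (K / 2 + 1),
        ((K.choose (2 * j) * ((2 * j).factorial / (j.factorial * 2 ^ j)) : ℕ) : ℝ)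
          * (-1) ^ j * (v : ℝ) ^ j * (θ i ω + ε i ω) ^ (K - 2 * j)) = Y i ω := fun i => rfl
    funext n
    simp only [hterm, one_div, inv_mul_eq_div]
  rw [hfun]
  have hEq : (∫ ω, θ 0 ω ^ K ∂μ) = ∫ ω, Y 0 ω ∂μ := hE.symm
  rw [hEq]
  exact hω
end

section
/- Let d ∈ ℕ with d ≥ 1, let v > 0, let (Ω, 𝓕, ℙ) be a probability space, and let θ : ℕ → (Fin d → ℝ) be a deterministic sequence. Let (εᵢ)_{i ∈ ℕ} be an independent family of random vectors in Fin d → ℝ, each with law Measure.pi (fun _ : Fin d => gaussianReal 0 v), and set Xᵢ := θ i + εᵢ. Then, ℙ-almost surely, for every g ∈ ℕ there exists N ∈ ℕ such that for all n ≥ N: the only polynomial P ∈ MvPolynomial (Fin d) ℝ with P.totalDegree ≤ g satisfying MvPolynomial.eval (Xᵢ(ω)) P = 0 for all i < n is P = 0. -/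
open MeasureTheory ProbabilityTheory Filter
open scoped NNReal
open MvPolynomial Matrix

set_option synthInstance.maxHeartbeats 1000000
set_option maxHeartbeats 1000000
set_option linter.unusedVariables false


lemma zero_set_null_fin : ∀ (n : ℕ) (ν : Fin n → Measure ℝ),
    (∀ i, IsProbabilityMeasure (ν i)) → (∀ i, NoAtoms (ν i)) →
    ∀ P : MvPolynomial (Fin n) ℝ, P ≠ 0 →
    Measure.pi ν {x | MvPolynomial.eval x P = 0} = 0 := by
  intro n
  induction n with
  | zero =>
    intro ν _ _ P hP
    obtain ⟨c, rfl⟩ := MvPolynomial.C_surjective (Fin 0) P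
    have hc : c ≠ 0 := fun h => hP (by simp [h])
    have : {x : Fin 0 → ℝ | MvPolynomial.eval x (C c) = 0} = ∅ := by
      ext x; simp [hc]
    rw [this]; exact measure_empty
  | succ n IH =>
    intro ν hprob hatom P hP
    haveI := hprob; haveI := hatom
    have hSm : MeasurableSet {x : Fin (n+1) → ℝ | eval x P = 0} :=
      (isClosed_singleton.preimage (MvPolynomial.continuous_eval P)).measurableSet
    set q := finSuccEquiv ℝ n P with hqdef
    have hq0 : q ≠ 0 := by
      intro h
      exact hP ((finSuccEquiv ℝ n).injective (h.trans (map_zero _).symm))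
    have hc : q.leadingCoeff ≠ 0 := Polynomial.leadingCoeff_ne_zero.mpr hq0
    set ρ := Measure.pi (fun j : Fin n => ν j.succ) with hρdef
    have hA : ρ {s : Fin n → ℝ | eval s q.leadingCoeff = 0} = 0 :=
      IH (fun j => ν j.succ) (fun j => hprob _) (fun j => hatom _) _ hc
    have hmp := (measurePreserving_piFinSuccAbove ν 0).symm
    have key : Measure.pi ν {x | eval x P = 0}
        = ((ν 0).prod (Measure.pi fun j => ν ((0 : Fin (n+1)).succAbove j)))
          ((MeasurableEquiv.piFinSuccAbove (fun _ => ℝ) 0).symm ⁻¹' {x | eval x P = 0}) :=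
      (hmp.measure_preimage hSm.nullMeasurableSet).symm
    rw [key]
    have hpre : (MeasurableEquiv.piFinSuccAbove (fun _ : Fin (n+1) => ℝ) 0).symm ⁻¹'
        {x | eval x P = 0}
        = {p : ℝ × (Fin n → ℝ) |
            Polynomial.eval p.1 (Polynomial.map (eval p.2) q) = 0} := by
      ext ⟨y, s⟩
      simp only [Set.mem_preimage, Set.mem_setOf_eq, MeasurableEquiv.piFinSuccAbove_symm_apply,
        Fin.insertNthEquiv_zero, Fin.consEquiv_apply]
      rw [show ((Fin.consEquiv fun _ => ℝ) (y, s)) = Fin.cons y s from rfl,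
        eval_eq_eval_mv_eval']
    have hTm : MeasurableSet {p : ℝ × (Fin n → ℝ) |
        Polynomial.eval p.1 (Polynomial.map (eval p.2) q) = 0} := by
      rw [← hpre]
      exact (MeasurableEquiv.piFinSuccAbove (fun _ : Fin (n+1) => ℝ) 0).symm.measurable hSm
    rw [hpre]
    have hsucc : (fun j : Fin n => ν ((0 : Fin (n+1)).succAbove j)) = fun j => ν j.succ := by
      simp [Fin.succAbove_zero]
    rw [hsucc, Measure.prod_apply_symm hTm]
    have hae : (fun s : Fin n → ℝ =>
        (ν 0) ((fun y => (y, s)) ⁻¹' {p : ℝ × (Fin n → ℝ) |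
          Polynomial.eval p.1 (Polynomial.map (eval p.2) q) = 0})) =ᵐ[ρ] 0 := by
      have : ∀ᵐ s ∂ρ, eval s q.leadingCoeff ≠ 0 := by
        rw [ae_iff]
        simpa using hA
      filter_upwards [this] with s hs
      have hmapne : Polynomial.map (eval s) q ≠ 0 := by
        intro h
        apply hs
        have h2 := congrArg (fun r => Polynomial.coeff r q.natDegree) h
        simp only [Polynomial.coeff_map, Polynomial.coeff_zero] at h2
        exact h2
      have hfin : Set.Finite {y : ℝ | Polynomial.eval y (Polynomial.map (eval s) q) = 0} :=
        Polynomial.finite_setOf_isRoot hmapne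
      have : ((fun y => (y, s)) ⁻¹' {p : ℝ × (Fin n → ℝ) |
          Polynomial.eval p.1 (Polynomial.map (eval p.2) q) = 0})
          = {y : ℝ | Polynomial.eval y (Polynomial.map (eval s) q) = 0} := rfl
      rw [this]
      haveI : NullSingletonClass (ν 0) := hatom 0
      exact hfin.measure_zero _
    rw [lintegral_congr_ae hae]
    simp

lemma zero_set_null {ι : Type*} [Fintype ι] (ν : ι → Measure ℝ)
    (hprob : ∀ i, IsProbabilityMeasure (ν i)) (hatom : ∀ i, NoAtoms (ν i))
    (P : MvPolynomial ι ℝ) (hP : P ≠ 0) :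
    Measure.pi ν {x | MvPolynomial.eval x P = 0} = 0 := by
  haveI := hprob
  set f : Fin (Fintype.card ι) ≃ ι := (Fintype.equivFin ι).symm with hf
  have hSm : MeasurableSet {x : ι → ℝ | eval x P = 0} :=
    (isClosed_singleton.preimage (MvPolynomial.continuous_eval P)).measurableSet
  have hmp := measurePreserving_piCongrLeft ν f
  rw [← hmp.measure_preimage hSm.nullMeasurableSet]
  have hpre : (MeasurableEquiv.piCongrLeft (fun _ : ι => ℝ) f) ⁻¹' {x | eval x P = 0}
      = {x : Fin (Fintype.card ι) → ℝ | eval x (rename f.symm P) = 0} := by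
    ext x
    simp only [Set.mem_preimage, Set.mem_setOf_eq, eval_rename]
    have : (MeasurableEquiv.piCongrLeft (fun _ : ι => ℝ) f) x = x ∘ f.symm := by
      ext i
      simp [MeasurableEquiv.piCongrLeft, Equiv.piCongrLeft, Equiv.piCongrLeft']
    rw [this]
  rw [hpre]
  exact zero_set_null_fin _ _ (fun j => hprob _) (fun j => hatom _) _
    (fun h => hP (by simpa using congrArg (rename f) h))


noncomputable def evalLin (d : ℕ) (x : Fin d → ℝ) :
    MvPolynomial (Fin d) ℝ →ₗ[ℝ] ℝ where
  toFun P := eval x P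
  map_add' P Q := by simp
  map_smul' c P := by simp [MvPolynomial.smul_eval]

lemma exists_finset_points (d g : ℕ) :
    ∃ t : Finset (Fin d → ℝ), ∀ P : MvPolynomial (Fin d) ℝ, P.totalDegree ≤ g →
      (∀ x ∈ t, eval x P = 0) → P = 0 := by
  classical
  set V := restrictTotalDegree (Fin d) ℝ g with hV
  haveI : FiniteDimensional ℝ V := inferInstance
  set W : Finset (Fin d → ℝ) → Submodule ℝ (MvPolynomial (Fin d) ℝ) :=
    fun t => V ⊓ ⨅ x ∈ t, LinearMap.ker (evalLin d x) with hW
  have hWle : ∀ t, W t ≤ V := fun t => inf_le_left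
  haveI hWfd : ∀ t, FiniteDimensional ℝ (W t) := fun t =>
    Submodule.finiteDimensional_of_le (hWle t)
  set r : Finset (Fin d → ℝ) → ℕ := fun t => Module.finrank ℝ (W t) with hr
  have hex : ∃ n, ∃ t, r t = n := ⟨r ∅, ∅, rfl⟩
  obtain ⟨t₀, hn₀⟩ := Nat.find_spec hex
  have hmin : ∀ m, (∃ t, r t = m) → Nat.find hex ≤ m := fun m hm => Nat.find_le hm
  -- W t₀ = ⊥
  have hbot : W t₀ = ⊥ := by
    by_contra hne
    obtain ⟨P, hPW, hP0⟩ := Submodule.exists_mem_ne_zero_of_ne_bot hne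
    have hPne : ∃ x, eval x P ≠ 0 := by
      by_contra hall
      push_neg at hall
      exact hP0 (MvPolynomial.funext fun x => by simp [hall x])
    obtain ⟨x, hx⟩ := hPne
    have hlt : W (insert x t₀) < W t₀ := by
      refine lt_of_le_of_ne ?_ ?_
      · refine le_inf inf_le_left (le_iInf fun y => le_iInf fun hy => ?_)
        refine le_trans inf_le_right (iInf_le_of_le y (iInf_le_of_le (Finset.mem_insert_of_mem hy) le_rfl))
      · intro heq
        have hPmem : P ∈ W (insert x t₀) := heq ▸ hPW
        have hle : (⨅ y ∈ insert x t₀, LinearMap.ker (evalLin d y))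
            ≤ LinearMap.ker (evalLin d x) :=
          iInf_le_of_le x (iInf_le_of_le (Finset.mem_insert_self x t₀) le_rfl)
        exact hx (hle hPmem.2)
    have := Submodule.finrank_lt_finrank_of_lt hlt
    have hge := hmin (r (insert x t₀)) ⟨_, rfl⟩
    simp only [hr] at hn₀ hge
    omega
  refine ⟨t₀, fun P hdeg hvan => ?_⟩
  have hPW : P ∈ W t₀ := by
    refine ⟨((mem_restrictTotalDegree (σ := Fin d) (R := ℝ) (m := g) P).mpr hdeg), ?_⟩
    exact Submodule.mem_iInf _ |>.mpr fun y => Submodule.mem_iInf _ |>.mpr fun hy =>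
      LinearMap.mem_ker.mpr (hvan y hy)
  rw [hbot] at hPW
  exact hPW

lemma good_poly (d g : ℕ) : ∃ (K : ℕ) (Δ : MvPolynomial (Fin K × Fin d) ℝ), Δ ≠ 0 ∧
    ∀ x : Fin K → Fin d → ℝ, eval (fun p : Fin K × Fin d => x p.1 p.2) Δ ≠ 0 →
      ∀ P : MvPolynomial (Fin d) ℝ, P.totalDegree ≤ g →
        (∀ j, eval (x j) P = 0) → P = 0 := by
  classical
  obtain ⟨t, ht⟩ := exists_finset_points d g
  set K := t.card with hK
  set V := restrictTotalDegree (Fin d) ℝ g with hV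
  set D := Module.finrank ℝ V with hD
  set b : Module.Basis (Fin D) ℝ V := Module.finBasis ℝ V with hb
  set NA : Matrix (Fin K) (Fin D) (MvPolynomial (Fin K × Fin d) ℝ) :=
    fun j i => rename (Prod.mk j) ((b i : MvPolynomial (Fin d) ℝ)) with hNA
  set A : (Fin K → Fin d → ℝ) → Matrix (Fin K) (Fin D) ℝ :=
    fun x j i => eval (x j) ((b i : MvPolynomial (Fin d) ℝ)) with hA
  have helper1 : ∀ x : Fin K → Fin d → ℝ,
      eval (fun p : Fin K × Fin d => x p.1 p.2) (NAᵀ * NA).det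
        = ((A x)ᵀ * A x).det := by
    intro x
    rw [RingHom.map_det]
    congr 1
    have hmap : NA.map (eval (fun p : Fin K × Fin d => x p.1 p.2)) = A x := by
      ext j i
      simp only [Matrix.map_apply, hNA, hA, eval_rename]
      exact eval_rename _ _ _
    rw [RingHom.mapMatrix_apply, Matrix.map_mul, Matrix.transpose_map, hmap]
  have helper2 : ∀ (c : Fin D → ℝ) (y : Fin d → ℝ),
      eval y (((∑ i, c i • b i : V) : MvPolynomial (Fin d) ℝ))
        = ∑ i, c i * eval y ((b i : MvPolynomial (Fin d) ℝ)) := by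
    intro c y
    rw [Submodule.coe_sum, map_sum]
    exact Finset.sum_congr rfl fun i _ => by
      rw [Submodule.coe_smul, MvPolynomial.smul_eval]
  refine ⟨K, (NAᵀ * NA).det, ?_, ?_⟩
  · -- nonzero: evaluate at the points of t
    set p : Fin K → Fin d → ℝ := fun j => ((t.equivFin.symm j : t) : Fin d → ℝ) with hp
    intro hzero
    have hx : eval (fun q : Fin K × Fin d => p q.1 q.2) (NAᵀ * NA).det = 0 := by
      rw [hzero, map_zero]
    rw [helper1 p] at hx
    obtain ⟨c, hc0, hGc⟩ := (Matrix.exists_mulVec_eq_zero_iff).mpr hx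
    have hAc : A p *ᵥ c = 0 := by
      have hdot : (A p *ᵥ c) ⬝ᵥ (A p *ᵥ c) = 0 := by
        calc (A p *ᵥ c) ⬝ᵥ (A p *ᵥ c) = (c ᵥ* (A p)ᵀ) ⬝ᵥ (A p *ᵥ c) := by
              rw [Matrix.vecMul_transpose]
          _ = c ⬝ᵥ ((A p)ᵀ *ᵥ (A p *ᵥ c)) := by rw [Matrix.dotProduct_mulVec c]
          _ = c ⬝ᵥ (((A p)ᵀ * A p) *ᵥ c) := by rw [Matrix.mulVec_mulVec]
          _ = 0 := by rw [hGc, dotProduct_zero]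
      exact dotProduct_self_eq_zero.mp hdot
    set Q : V := ∑ i, c i • b i with hQ
    have hQdeg : (Q : MvPolynomial (Fin d) ℝ).totalDegree ≤ g :=
      (mem_restrictTotalDegree (σ := Fin d) (R := ℝ) (m := g) _).mp Q.2
    have hQvan : ∀ y ∈ t, eval y (Q : MvPolynomial (Fin d) ℝ) = 0 := by
      intro y hy
      have : y = p (t.equivFin ⟨y, hy⟩) := by simp [hp]
      rw [this, hQ, helper2]
      have := congrFun hAc (t.equivFin ⟨y, hy⟩)
      simp only [Matrix.mulVec, dotProduct, hA, Pi.zero_apply] at this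
      rw [← this]
      exact Finset.sum_congr rfl fun i _ => mul_comm _ _
    have hQ0 : (Q : MvPolynomial (Fin d) ℝ) = 0 := ht _ hQdeg hQvan
    have hQ0' : Q = 0 := Subtype.ext hQ0
    have hlin := b.linearIndependent
    rw [Fintype.linearIndependent_iff] at hlin
    exact hc0 (funext fun i => hlin c (by rw [← hQ] at *; exact hQ0') i)
  · intro x hx P hdeg hvan
    set PV : V := ⟨P, (mem_restrictTotalDegree (σ := Fin d) (R := ℝ) (m := g) P).mpr hdeg⟩
      with hPV
    set c : Fin D → ℝ := fun i => b.repr PV i with hc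
    have hsum : ∑ i, c i • b i = PV := b.sum_repr PV
    have hAc : A x *ᵥ c = 0 := by
      funext j
      have : eval (x j) ((PV : MvPolynomial (Fin d) ℝ)) = 0 := hvan j
      rw [← hsum, helper2] at this
      simp only [Matrix.mulVec, dotProduct, hA, Pi.zero_apply]
      rw [← this]
      exact Finset.sum_congr rfl fun i _ => mul_comm _ _
    have hGc : ((A x)ᵀ * A x) *ᵥ c = 0 := by
      rw [← Matrix.mulVec_mulVec, hAc, Matrix.mulVec_zero]
    have hc0 : c = 0 := by
      by_contra hcne
      exact (helper1 x ▸ hx) (Matrix.exists_mulVec_eq_zero_iff.mp ⟨c, hcne, hGc⟩)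
    have : PV = 0 := by
      rw [← hsum, hc0]
      simp
    exact Subtype.ext_iff.mp this



lemma joint_law {Ω : Type*} [MeasurableSpace Ω] (μ : Measure Ω) [IsProbabilityMeasure μ]
    (d D : ℕ) (v : ℝ≥0) (ε : ℕ → Ω → Fin d → ℝ)
    (hmeas : ∀ i, Measurable (ε i))
    (hindep : iIndepFun ε μ)
    (hlaw : ∀ i, Measure.map (ε i) μ = Measure.pi fun _ : Fin d => gaussianReal 0 v) :
    Measure.map (fun ω (p : Fin D × Fin d) => ε p.1 ω p.2) μ
      = Measure.pi (fun _ : Fin D × Fin d => gaussianReal 0 v) := by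
  have hZ : Measurable (fun ω (p : Fin D × Fin d) => ε p.1 ω p.2) := by
    rw [measurable_pi_iff]
    exact fun p => (measurable_pi_apply p.2).comp (hmeas p.1)
  refine (Measure.pi_eq (μ := fun _ : Fin D × Fin d => gaussianReal 0 v) fun s hs => ?_).symm
  rw [Measure.map_apply hZ (MeasurableSet.univ_pi hs)]
  set B : ℕ → Set (Fin d → ℝ) := fun i =>
    if h : i < D then Set.univ.pi (fun j => s (⟨i, h⟩, j)) else Set.univ with hB
  have hBm : ∀ i, MeasurableSet (B i) := by
    intro i
    by_cases h : i < D
    · simp only [hB, dif_pos h]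
      exact MeasurableSet.univ_pi fun j => hs _
    · simp only [hB, dif_neg h]
      exact MeasurableSet.univ
  have hpre : (fun ω (p : Fin D × Fin d) => ε p.1 ω p.2) ⁻¹' Set.univ.pi s
      = ⋂ i ∈ Finset.range D, ε i ⁻¹' B i := by
    ext ω
    simp only [Set.mem_preimage, Set.mem_pi, Set.mem_univ, forall_true_left, Set.mem_iInter,
      Finset.mem_range, hB]
    constructor
    · intro h i hi
      rw [dif_pos hi]
      intro j _
      exact h (⟨i, hi⟩, j)
    · intro h p
      have h2 := h p.1 p.1.isLt
      rw [dif_pos p.1.isLt] at h2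
      simpa using h2 p.2 (Set.mem_univ _)
  rw [hpre, hindep.meas_biInter (fun i _ => ⟨B i, hBm i, rfl⟩)]
  have hfac : ∀ i : Fin D, μ (ε i.1 ⁻¹' B i.1) = ∏ j : Fin d, gaussianReal 0 v (s (i, j)) := by
    intro i
    rw [← Measure.map_apply (hmeas i.1) (hBm i.1), hlaw]
    simp only [hB, i.isLt, dif_pos, Fin.eta]
    rw [Measure.pi_pi]
  rw [← Fin.prod_univ_eq_prod_range (fun i => μ (ε i ⁻¹' B i)) D]
  rw [Fintype.prod_prod_type]
  exact Finset.prod_congr rfl fun i _ => hfac i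

lemma eval_bind1 {σ τ : Type*} (z : τ → ℝ) (f : σ → MvPolynomial τ ℝ)
    (φ : MvPolynomial σ ℝ) :
    eval z (bind₁ f φ) = eval (fun i => eval z (f i)) φ :=
  eval₂Hom_bind₁ _ _ _ _

lemma gaussian_noAtoms {v : ℝ≥0} (hv : v ≠ 0) (m : ℝ) : NoAtoms (gaussianReal m v) :=
  ⟨fun x => (gaussianReal_absolutelyContinuous m hv) (measure_singleton x)⟩

/-- Failure of the naive approach: with nondegenerate isotropic Gaussian noise,
almost surely for every degree `g` the only polynomial of total degree at most `g`
vanishing at all the first `n` noisy observations `Xᵢ = θᵢ + εᵢ` (for `n` large)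
is the zero polynomial. -/
theorem naive_vanishing_ideal_trivial
    (d : ℕ) (hd : 1 ≤ d) (v : ℝ≥0) (hv : 0 < v)
    {Ω : Type*} [MeasurableSpace Ω] (μ : Measure Ω) [IsProbabilityMeasure μ]
    (θ : ℕ → Fin d → ℝ) (ε : ℕ → Ω → Fin d → ℝ)
    (hmeas : ∀ i, Measurable (ε i))
    (hindep : iIndepFun ε μ)
    (hlaw : ∀ i, Measure.map (ε i) μ = Measure.pi fun _ : Fin d => gaussianReal 0 v) :
    ∀ᵐ ω ∂μ, ∀ g : ℕ, ∃ N : ℕ, ∀ n ≥ N, ∀ P : MvPolynomial (Fin d) ℝ,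
      P.totalDegree ≤ g →
        (∀ i < n, MvPolynomial.eval (θ i + ε i ω) P = 0) → P = 0 := by
  rw [ae_all_iff]
  intro g
  obtain ⟨K, Δ, hΔ, hΔgood⟩ := good_poly d g
  set Δθ : MvPolynomial (Fin K × Fin d) ℝ :=
    bind₁ (fun p => X p + C (θ p.1 p.2)) Δ with hΔθ
  have hΔθ0 : Δθ ≠ 0 := by
    intro h
    apply hΔ
    have hcomp : bind₁ (fun p : Fin K × Fin d => X p - C (θ p.1 p.2)) Δθ = Δ := by
      rw [hΔθ, bind₁_bind₁]
      have : (fun i : Fin K × Fin d =>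
          bind₁ (fun p : Fin K × Fin d => X p - C (θ p.1 p.2)) (X i + C (θ i.1 i.2)))
          = X := by
        funext i
        simp [bind₁_X_right]
      rw [this, bind₁_X_left]
      rfl
    rw [h, map_zero] at hcomp
    exact hcomp.symm
  set Z : Ω → (Fin K × Fin d → ℝ) := fun ω p => ε p.1 ω p.2 with hZdef
  have hZ : Measurable Z := by
    rw [measurable_pi_iff]
    exact fun p => (measurable_pi_apply p.2).comp (hmeas p.1)
  have hSm : MeasurableSet {z : Fin K × Fin d → ℝ | eval z Δθ = 0} :=
    (isClosed_singleton.preimage (MvPolynomial.continuous_eval Δθ)).measurableSet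
  have hnull : μ {ω | eval (Z ω) Δθ = 0} = 0 := by
    have : {ω | eval (Z ω) Δθ = 0} = Z ⁻¹' {z | eval z Δθ = 0} := rfl
    rw [this, ← Measure.map_apply hZ hSm, joint_law μ d K v ε hmeas hindep hlaw]
    exact zero_set_null _ (fun _ => inferInstance)
      (fun _ => gaussian_noAtoms hv.ne' 0) _ hΔθ0
  rw [ae_iff]
  rw [show {ω | ¬∃ N, ∀ n ≥ N, ∀ P : MvPolynomial (Fin d) ℝ, P.totalDegree ≤ g →
      (∀ i < n, MvPolynomial.eval (θ i + ε i ω) P = 0) → P = 0}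
    = {ω | ¬∃ N, ∀ n ≥ N, ∀ P : MvPolynomial (Fin d) ℝ, P.totalDegree ≤ g →
      (∀ i < n, MvPolynomial.eval (θ i + ε i ω) P = 0) → P = 0} from rfl]
  refine measure_mono_null ?_ hnull
  intro ω hω
  simp only [Set.mem_setOf_eq] at hω ⊢
  by_contra hne
  apply hω
  refine ⟨K, fun n hn P hdeg hvan => ?_⟩
  refine hΔgood (fun j => θ j + ε j ω) ?_ P hdeg
    (fun j => hvan j (lt_of_lt_of_le j.isLt hn))
  have hev : eval (fun p : Fin K × Fin d => (θ p.1 + ε p.1 ω) p.2) Δ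
      = eval (Z ω) Δθ := by
    rw [hΔθ, eval_bind1]
    have harg : (fun p : Fin K × Fin d => (θ p.1 + ε p.1 ω) p.2)
        = fun p : Fin K × Fin d => eval (Z ω) (X p + C (θ p.1 p.2)) :=
      funext fun p => by simp [hZdef, add_comm]
    rw [harg]
  rw [hev]
  exact hne
end

section
/- Let d, m ∈ ℕ and fix degrees g : Fin m → ℕ. Let P ∈ MvPolynomial (Fin d) ℝ, and for each n ∈ ℕ let Q^{(n)} : Fin m → MvPolynomial (Fin d) ℝ satisfy (Q^{(n)} j).totalDegree ≤ g j for all j. Suppose that for every monomial exponent m' : Fin d →₀ ℕ, the coefficient (∏_{j : Fin m} Q^{(n)} j).coeff m' converges to P.coeff m' as n → ∞. Then there exist polynomials Q : Fin m → MvPolynomial (Fin d) ℝ with (Q j).totalDegree ≤ g j for all j such that P = ∏_{j : Fin m} Q j. In other words, the set of real polynomials that factor into m factors of total degrees at most g₁, …, g_m is closed under coefficientwise limits. -/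
open Filter

private lemma aux_coeff_tendsto_prod {d : ℕ} {ι : Type*} (S : Finset ι)
    (F : ℕ → ι → MvPolynomial (Fin d) ℝ) (G : ι → MvPolynomial (Fin d) ℝ)
    (h : ∀ j ∈ S, ∀ s : Fin d →₀ ℕ,
      Tendsto (fun n => (F n j).coeff s) atTop (nhds ((G j).coeff s))) :
    ∀ s : Fin d →₀ ℕ,
      Tendsto (fun n => (∏ j ∈ S, F n j).coeff s) atTop (nhds ((∏ j ∈ S, G j).coeff s)) := by
  classical
  induction S using Finset.induction_on with
  | empty => intro s; simp
  | insert _ _ ha ih =>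
      rename_i a S
      intro s
      have hih := ih (fun j hj => h j (Finset.mem_insert_of_mem hj))
      simp only [Finset.prod_insert ha, MvPolynomial.coeff_mul]
      refine tendsto_finset_sum _ (fun x _ => ?_)
      exact ((h a (Finset.mem_insert_self a S) x.1).mul (hih x.2))

private lemma aux_exp_le {d : ℕ} {p : MvPolynomial (Fin d) ℝ} {s : Fin d →₀ ℕ}
    (hs : s ∈ p.support) (i : Fin d) : s i ≤ p.totalDegree := by
  refine le_trans ?_ (MvPolynomial.le_totalDegree hs)
  by_cases h : s i = 0
  · simp [h]
  · have : i ∈ s.support := Finsupp.mem_support_iff.mpr h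
    exact Finset.single_le_sum (f := fun x => s x) (fun _ _ => Nat.zero_le _) this

/-- Closedness of the set of polynomials factoring into `m` factors of prescribed
total degrees: if the products `∏ j, Q n j`, with `(Q n j).totalDegree ≤ g j`,
converge coefficientwise to `P`, then `P` itself factors into `m` polynomials of
total degrees at most `g j`. -/
theorem factorizable_closed_under_coeff_limits (d m : ℕ) (g : Fin m → ℕ)
    (P : MvPolynomial (Fin d) ℝ) (Q : ℕ → Fin m → MvPolynomial (Fin d) ℝ)
    (hdeg : ∀ n j, (Q n j).totalDegree ≤ g j)
    (hconv : ∀ m' : Fin d →₀ ℕ,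
      Tendsto (fun n => (∏ j : Fin m, Q n j).coeff m') atTop (nhds (P.coeff m'))) :
    ∃ R : Fin m → MvPolynomial (Fin d) ℝ,
      (∀ j, (R j).totalDegree ≤ g j) ∧ P = ∏ j : Fin m, R j := by
  classical
  -- trivial case m = 0
  rcases Nat.eq_zero_or_pos m with hm | hm
  · subst hm
    refine ⟨fun _ => 1, fun j => j.elim0, ?_⟩
    rw [show (∏ j : Fin 0, (fun _ : Fin 0 => (1 : MvPolynomial (Fin d) ℝ)) j) = 1 by simp]
    apply MvPolynomial.ext
    intro s
    have h2 := hconv s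
    have he : (fun n => (∏ j : Fin 0, Q n j).coeff s)
        = fun _ : ℕ => (1 : MvPolynomial (Fin d) ℝ).coeff s := by
      funext n; simp
    rw [he] at h2
    exact (tendsto_nhds_unique tendsto_const_nhds h2).symm
  set j0 : Fin m := ⟨0, hm⟩ with hj0
  -- trivial case P = 0
  by_cases hP : P = 0
  · refine ⟨fun _ => 0, fun j => by simp, ?_⟩
    rw [hP, Finset.prod_eq_zero (Finset.mem_univ j0) rfl]
  -- main case
  obtain ⟨m₀, hm₀⟩ := MvPolynomial.ne_zero_iff.mp hP
  obtain ⟨N, hN⟩ := eventually_atTop.mp ((hconv m₀).eventually_ne hm₀)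
  set Q' : ℕ → Fin m → MvPolynomial (Fin d) ℝ := fun n => Q (n + N) with hQ'def
  have hconv' : ∀ s : Fin d →₀ ℕ,
      Tendsto (fun n => (∏ j : Fin m, Q' n j).coeff s) atTop (nhds (P.coeff s)) :=
    fun s => (hconv s).comp (tendsto_add_atTop_nat N)
  have hQ'ne : ∀ n j, Q' n j ≠ 0 := by
    intro n j hzero
    have hz : (∏ j : Fin m, Q (n + N) j) = 0 :=
      Finset.prod_eq_zero (Finset.mem_univ j) hzero
    exact hN (n + N) (Nat.le_add_left _ _) (by rw [hz]; simp)
  have hdeg' : ∀ n j, (Q' n j).totalDegree ≤ g j := fun n j => hdeg (n + N) j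
  -- the coefficient-vector spaces
  let e : ∀ j : Fin m, (Fin d → Fin (g j + 1)) → (Fin d →₀ ℕ) :=
    fun j a => Finsupp.equivFunOnFinite.symm (fun i => (a i : ℕ))
  let L : ∀ j : Fin m, MvPolynomial (Fin d) ℝ →ₗ[ℝ] ((Fin d → Fin (g j + 1)) → ℝ) :=
    fun j => LinearMap.pi (fun a => MvPolynomial.lcoeff ℝ (e j a))
  have hLapply : ∀ j q a, L j q a = q.coeff (e j a) := fun j q a => rfl
  have he_apply : ∀ j a i, (e j a) i = (a i : ℕ) := by
    intro j a i; simp [e, Finsupp.equivFunOnFinite]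
  -- coefficients of a degree-bounded polynomial are read off from L
  have hcoeff_of : ∀ (j : Fin m) (q : MvPolynomial (Fin d) ℝ), q.totalDegree ≤ g j →
      ∀ s : Fin d →₀ ℕ, q.coeff s =
        if h : ∀ i, s i ≤ g j then L j q (fun i => ⟨s i, Nat.lt_succ_of_le (h i)⟩) else 0 := by
    intro j q hq s
    split_ifs with h
    · rw [hLapply]
      congr 1
      ext i
      rw [he_apply]
    · push_neg at h
      obtain ⟨i, hi⟩ := h
      by_contra hc
      have hs : s ∈ q.support := MvPolynomial.mem_support_iff.mpr hc
      exact absurd (le_trans (aux_exp_le hs i) hq) (not_le.mpr hi)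
  have hLne : ∀ (j : Fin m) (q : MvPolynomial (Fin d) ℝ), q.totalDegree ≤ g j → q ≠ 0 →
      L j q ≠ 0 := by
    intro j q hq hq0 hL0
    obtain ⟨s, hs⟩ := MvPolynomial.ne_zero_iff.mp hq0
    have hbd : ∀ i, s i ≤ g j := fun i =>
      le_trans (aux_exp_le (MvPolynomial.mem_support_iff.mpr hs) i) hq
    have := hcoeff_of j q hq s
    rw [dif_pos hbd, hL0] at this
    exact hs (by simpa using this)
  -- normalization
  set a : ℕ → ∀ j : Fin m, ℝ := fun n j => ‖L j (Q' n j)‖ with ha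
  have hapos : ∀ n j, 0 < a n j := fun n j =>
    norm_pos_iff.mpr (hLne j (Q' n j) (hdeg' n j) (hQ'ne n j))
  set qp : ℕ → Fin m → MvPolynomial (Fin d) ℝ := fun n j => (a n j)⁻¹ • Q' n j with hqp
  have hqpdeg : ∀ n j, (qp n j).totalDegree ≤ g j := fun n j =>
    le_trans (MvPolynomial.totalDegree_smul_le _ _) (hdeg' n j)
  set v : ℕ → ∀ j : Fin m, (Fin d → Fin (g j + 1)) → ℝ := fun n j => L j (qp n j) with hv
  have hvnorm : ∀ n j, ‖v n j‖ = 1 := by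
    intro n j
    have : v n j = (a n j)⁻¹ • L j (Q' n j) := by
      simp [hv, hqp, map_smul]
    rw [this, norm_smul, norm_inv, Real.norm_eq_abs, abs_of_pos (hapos n j)]
    exact inv_mul_cancel₀ (ne_of_gt (hapos n j))
  -- compact sets
  set V : ∀ j : Fin m, Submodule ℝ ((Fin d → Fin (g j + 1)) → ℝ) :=
    fun j => Submodule.map (L j) (MvPolynomial.restrictTotalDegree (Fin d) ℝ (g j)) with hV
  set K : ∀ j : Fin m, Set ((Fin d → Fin (g j + 1)) → ℝ) :=
    fun j => Metric.sphere (0 : (Fin d → Fin (g j + 1)) → ℝ) 1 ∩ (V j : Set _) with hK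
  have hKcompact : ∀ j, IsCompact (K j) := fun j =>
    (isCompact_sphere _ _).inter_right (Submodule.closed_of_finiteDimensional (V j))
  have hvK : ∀ n, v n ∈ Set.univ.pi K := by
    intro n j _
    refine ⟨by simpa using hvnorm n j, ⟨qp n j, ?_, rfl⟩⟩
    exact (MvPolynomial.mem_restrictTotalDegree _ _ _).mpr (hqpdeg n j)
  obtain ⟨w, hw, φ, hφ, hwt⟩ := (isCompact_univ_pi hKcompact).tendsto_subseq hvK
  -- extract limit polynomials
  have hwV : ∀ j, w j ∈ V j := fun j => (hw j (Set.mem_univ j)).2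
  choose r hr1 hr2 using fun j => hwV j
  have hrdeg : ∀ j, (r j).totalDegree ≤ g j := fun j =>
    (MvPolynomial.mem_restrictTotalDegree _ _ _).mp (hr1 j)
  have hrne : ∀ j, r j ≠ 0 := by
    intro j hj
    have hw1 : ‖w j‖ = 1 := by
      have := (hw j (Set.mem_univ j)).1
      simpa using this
    rw [← hr2 j, hj, map_zero, norm_zero] at hw1
    norm_num at hw1
  -- coefficientwise convergence of the normalized factors along the subsequence
  have hvconv : ∀ j, Tendsto (fun k => v (φ k) j) atTop (nhds (w j)) := by
    intro j
    exact (tendsto_pi_nhds.mp hwt) j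
  have hqpconv : ∀ j (s : Fin d →₀ ℕ),
      Tendsto (fun k => (qp (φ k) j).coeff s) atTop (nhds ((r j).coeff s)) := by
    intro j s
    by_cases h : ∀ i, s i ≤ g j
    · have h1 : ∀ k, (qp (φ k) j).coeff s =
          v (φ k) j (fun i => ⟨s i, Nat.lt_succ_of_le (h i)⟩) := by
        intro k
        rw [hcoeff_of j (qp (φ k) j) (hqpdeg (φ k) j) s, dif_pos h]
      have h2 : (r j).coeff s = w j (fun i => ⟨s i, Nat.lt_succ_of_le (h i)⟩) := by
        rw [hcoeff_of j (r j) (hrdeg j) s, dif_pos h, hr2 j]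
      simp only [h1, h2]
      exact (tendsto_pi_nhds.mp (hvconv j)) _
    · have h1 : ∀ k, (qp (φ k) j).coeff s = 0 := by
        intro k
        rw [hcoeff_of j (qp (φ k) j) (hqpdeg (φ k) j) s, dif_neg h]
      have h2 : (r j).coeff s = 0 := by
        rw [hcoeff_of j (r j) (hrdeg j) s, dif_neg h]
      simp only [h1, h2]
      exact tendsto_const_nhds
  have hprodconv : ∀ s : Fin d →₀ ℕ,
      Tendsto (fun k => (∏ j : Fin m, qp (φ k) j).coeff s) atTop
        (nhds ((∏ j : Fin m, r j).coeff s)) :=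
    aux_coeff_tendsto_prod Finset.univ (fun k => qp (φ k)) r (fun j _ => hqpconv j)
  -- the limit product is nonzero
  have hprodne : (∏ j : Fin m, r j) ≠ 0 :=
    Finset.prod_ne_zero_iff.mpr (fun j _ => hrne j)
  obtain ⟨s₀, hs₀⟩ := MvPolynomial.ne_zero_iff.mp hprodne
  -- relation between products
  set c : ℕ → ℝ := fun n => ∏ j : Fin m, a n j with hc
  have hcpos : ∀ n, 0 < c n := fun n => Finset.prod_pos (fun j _ => hapos n j)
  have hfactor : ∀ n (s : Fin d →₀ ℕ),
      (∏ j : Fin m, Q' n j).coeff s = c n * (∏ j : Fin m, qp n j).coeff s := by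
    intro n s
    have key : (∏ j : Fin m, Q' n j) = c n • ∏ j : Fin m, qp n j := by
      have h1 : ∀ j : Fin m, Q' n j = a n j • qp n j := by
        intro j
        rw [hqp]
        exact (smul_inv_smul₀ (ne_of_gt (hapos n j)) _).symm
      calc (∏ j : Fin m, Q' n j) = ∏ j : Fin m, (a n j • qp n j) := by
            exact Finset.prod_congr rfl (fun j _ => h1 j)
        _ = ∏ j : Fin m, (MvPolynomial.C (a n j) * qp n j) := by
            simp_rw [MvPolynomial.smul_eq_C_mul]
        _ = (∏ j : Fin m, MvPolynomial.C (a n j)) * ∏ j : Fin m, qp n j :=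
            Finset.prod_mul_distrib
        _ = MvPolynomial.C (c n) * ∏ j : Fin m, qp n j := by rw [← map_prod]
        _ = c n • ∏ j : Fin m, qp n j := (MvPolynomial.smul_eq_C_mul _ _).symm
    rw [key, MvPolynomial.coeff_smul, smul_eq_mul]
  -- convergence of the scalars
  have hsubconv : ∀ s : Fin d →₀ ℕ,
      Tendsto (fun k => (∏ j : Fin m, Q' (φ k) j).coeff s) atTop (nhds (P.coeff s)) :=
    fun s => (hconv' s).comp hφ.tendsto_atTop
  set cinf : ℝ := P.coeff s₀ / (∏ j : Fin m, r j).coeff s₀ with hcinf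
  have hctend : Tendsto (fun k => c (φ k)) atTop (nhds cinf) := by
    have hdiv : Tendsto
        (fun k => (∏ j : Fin m, Q' (φ k) j).coeff s₀ / (∏ j : Fin m, qp (φ k) j).coeff s₀)
        atTop (nhds cinf) := (hsubconv s₀).div (hprodconv s₀) hs₀
    refine hdiv.congr' ?_
    filter_upwards [(hprodconv s₀).eventually_ne hs₀] with k hk
    rw [hfactor (φ k) s₀]
    field_simp
  -- identify P
  have hPid : ∀ s : Fin d →₀ ℕ, P.coeff s = cinf * (∏ j : Fin m, r j).coeff s := by
    intro s
    have h1 : Tendsto (fun k => c (φ k) * (∏ j : Fin m, qp (φ k) j).coeff s) atTop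
        (nhds (cinf * (∏ j : Fin m, r j).coeff s)) := hctend.mul (hprodconv s)
    have h2 : (fun k => c (φ k) * (∏ j : Fin m, qp (φ k) j).coeff s)
        = fun k => (∏ j : Fin m, Q' (φ k) j).coeff s := by
      funext k; rw [hfactor (φ k) s]
    rw [h2] at h1
    exact tendsto_nhds_unique (hsubconv s) h1
  -- assemble the answer
  refine ⟨fun j => if j = j0 then cinf • r j0 else r j, ?_, ?_⟩
  · intro j
    by_cases h : j = j0
    · subst h
      simp only [if_pos rfl]
      exact le_trans (MvPolynomial.totalDegree_smul_le _ _) (hrdeg j0)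
    · simp only [if_neg h]
      exact hrdeg j
  · have hprodR : (∏ j : Fin m, if j = j0 then cinf • r j0 else r j)
        = cinf • ∏ j : Fin m, r j := by
      rw [← Finset.mul_prod_erase Finset.univ _ (Finset.mem_univ j0),
        ← Finset.mul_prod_erase Finset.univ r (Finset.mem_univ j0)]
      rw [if_pos rfl]
      rw [Finset.prod_congr rfl
        (fun j hj => if_neg (Finset.ne_of_mem_erase hj) :
          ∀ j ∈ Finset.univ.erase j0, (if j = j0 then cinf • r j0 else r j) = r j)]
      rw [smul_mul_assoc]
    rw [hprodR]
    apply MvPolynomial.ext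
    intro s
    rw [hPid s, MvPolynomial.coeff_smul, smul_eq_mul]
end

section
/- Let d, g, N ∈ ℕ, let P : Fin N → MvPolynomial (Fin d) ℝ with (P i).totalDegree ≤ g for each i, and let x₀ : Fin d → ℝ satisfy MvPolynomial.eval x₀ (P i) = 0 for every i. Assume that the gradient vectors (fun j : Fin d => MvPolynomial.eval x₀ (MvPolynomial.pderiv j (P i))), for i : Fin N, are linearly independent in Fin d → ℝ. Then for every ε > 0 there exists δ > 0 such that: for every Q : Fin N → MvPolynomial (Fin d) ℝ with (Q i).totalDegree ≤ g for all i and with |(Q i).coeff m − (P i).coeff m| < δ for all i : Fin N and all exponent vectors m : Fin d →₀ ℕ, there exists x : Fin d → ℝ with ‖x − x₀‖ < ε and MvPolynomial.eval x (Q i) = 0 for every i. -/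
open MvPolynomial

noncomputable def evalD {d : ℕ} (R : MvPolynomial (Fin d) ℝ) (x : Fin d → ℝ) :
    (Fin d → ℝ) →L[ℝ] ℝ :=
  ∑ j : Fin d, MvPolynomial.eval x (MvPolynomial.pderiv j R) •
    (ContinuousLinearMap.proj j : (Fin d → ℝ) →L[ℝ] ℝ)

lemma evalD_apply {d : ℕ} (R : MvPolynomial (Fin d) ℝ) (x v : Fin d → ℝ) :
    evalD R x v = ∑ j : Fin d, MvPolynomial.eval x (MvPolynomial.pderiv j R) * v j := by
  simp [evalD]

lemma hasStrictFDerivAt_mvpoly_eval {d : ℕ} (R : MvPolynomial (Fin d) ℝ) (x : Fin d → ℝ) :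
    HasStrictFDerivAt (fun y => MvPolynomial.eval y R) (evalD R x) x := by
  induction R using MvPolynomial.induction_on with
  | C a =>
      have h : evalD (C a : MvPolynomial (Fin d) ℝ) x = 0 := by
        ext v; simp [evalD_apply]
      rw [h]
      simpa using hasStrictFDerivAt_const (a : ℝ) x
  | add p q hp hq =>
      have h : evalD (p + q) x = evalD p x + evalD q x := by
        ext v; simp [evalD_apply, Finset.sum_add_distrib, add_mul]
      rw [h]
      have := hp.add hq
      simp only [map_add]
      exact this
  | mul_X p j hp =>
      have h2 : HasStrictFDerivAt (fun y : Fin d → ℝ => y j)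
          ((ContinuousLinearMap.proj j : (Fin d → ℝ) →L[ℝ] ℝ)) x :=
        (ContinuousLinearMap.proj (R := ℝ) (φ := fun _ : Fin d => ℝ) j).hasStrictFDerivAt
      have key : evalD (p * X j) x
          = MvPolynomial.eval x p • (ContinuousLinearMap.proj j : (Fin d → ℝ) →L[ℝ] ℝ)
            + x j • evalD p x := by
        classical
        ext v
        simp only [evalD_apply, ContinuousLinearMap.add_apply, ContinuousLinearMap.smul_apply,
          ContinuousLinearMap.proj_apply, smul_eq_mul, pderiv_mul, pderiv_X, map_add, map_mul,
          eval_X, Pi.single_apply, add_mul, Finset.sum_add_distrib,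
          apply_ite (MvPolynomial.eval x), map_one, map_zero,
          ite_mul, mul_ite, one_mul, zero_mul, mul_zero, mul_one, Finset.mul_sum]
        rw [Finset.sum_ite_eq Finset.univ j (fun k => MvPolynomial.eval x p * v k)]
        simp [mul_comm, mul_left_comm]
        ring
      have := hp.mul h2
      rw [key]
      simp only [map_mul, eval_X]
      exact this

noncomputable def expFin {d g : ℕ} (m : Fin d → Fin (g+1)) : Fin d →₀ ℕ :=
  Finsupp.equivFunOnFinite.symm fun j => (m j : ℕ)

lemma expFin_apply {d g : ℕ} (m : Fin d → Fin (g+1)) (j : Fin d) :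
    expFin m j = (m j : ℕ) := rfl

lemma expFin_injective {d g : ℕ} : Function.Injective (expFin (d := d) (g := g)) := by
  intro a b h
  funext j
  have := DFunLike.congr_fun h j
  rw [expFin_apply, expFin_apply] at this
  exact Fin.ext this

lemma mvpoly_decomp {d g : ℕ} (R : MvPolynomial (Fin d) ℝ) (hR : R.totalDegree ≤ g) :
    R = ∑ m : Fin d → Fin (g+1),
      MvPolynomial.monomial (expFin m) (R.coeff (expFin m)) := by
  classical
  have hsub : R.support ⊆ Finset.image (expFin (d := d) (g := g)) Finset.univ := by
    intro μ hμ
    have hle : ∀ j, μ j ≤ g := by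
      intro j
      refine le_trans ?_ (le_trans (MvPolynomial.le_totalDegree hμ) hR)
      by_cases hj : j ∈ μ.support
      · exact Finset.single_le_sum (fun k _ => Nat.zero_le _) hj
      · simp [Finsupp.notMem_support_iff.1 hj]
    refine Finset.mem_image.2 ⟨fun j => ⟨μ j, Nat.lt_succ_of_le (hle j)⟩,
      Finset.mem_univ _, ?_⟩
    ext j
    rfl
  calc R = ∑ μ ∈ R.support, MvPolynomial.monomial μ (R.coeff μ) := R.as_sum
    _ = ∑ μ ∈ Finset.image (expFin (d := d) (g := g)) Finset.univ, MvPolynomial.monomial μ (R.coeff μ) :=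
        Finset.sum_subset hsub (fun μ _ hμ => by
          rw [MvPolynomial.notMem_support_iff.1 hμ, map_zero])
    _ = ∑ m : Fin d → Fin (g+1),
          MvPolynomial.monomial (expFin m) (R.coeff (expFin m)) :=
        Finset.sum_image (fun a _ b _ h => expFin_injective h)

lemma eval_eq_sum_mono {d g : ℕ} (R : MvPolynomial (Fin d) ℝ) (hR : R.totalDegree ≤ g)
    (x : Fin d → ℝ) :
    MvPolynomial.eval x R
      = ∑ m : Fin d → Fin (g+1), R.coeff (expFin m) *
          MvPolynomial.eval x (MvPolynomial.monomial (expFin m) (1:ℝ)) := by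
  conv_lhs => rw [mvpoly_decomp R hR]
  rw [map_sum]
  exact Finset.sum_congr rfl fun m _ => by simp [MvPolynomial.eval_monomial]

lemma eval_pderiv_eq_sum_mono {d g : ℕ} (R : MvPolynomial (Fin d) ℝ)
    (hR : R.totalDegree ≤ g) (x : Fin d → ℝ) (j : Fin d) :
    MvPolynomial.eval x (MvPolynomial.pderiv j R)
      = ∑ m : Fin d → Fin (g+1), R.coeff (expFin m) *
          MvPolynomial.eval x (MvPolynomial.pderiv j
            (MvPolynomial.monomial (expFin m) (1:ℝ))) := by
  conv_lhs => rw [mvpoly_decomp R hR]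
  rw [map_sum, map_sum]
  refine Finset.sum_congr rfl fun m _ => ?_
  have h : (MvPolynomial.monomial (expFin m)) (R.coeff (expFin m))
      = MvPolynomial.C (R.coeff (expFin m)) * (MvPolynomial.monomial (expFin m)) (1:ℝ) := by
    rw [MvPolynomial.C_mul_monomial, mul_one]
  rw [h, MvPolynomial.pderiv_mul, MvPolynomial.pderiv_C, zero_mul, zero_add, map_mul,
    MvPolynomial.eval_C]

lemma surj_of_linearIndependent {N d : ℕ} (A : Fin N → Fin d → ℝ)
    (hA : LinearIndependent ℝ A) :
    Function.Surjective (fun w : Fin d → ℝ => fun i => ∑ j, A i j * w j) := by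
  classical
  set M : Matrix (Fin N) (Fin d) ℝ := Matrix.of A with hM
  set S : (Fin N → ℝ) →ₗ[ℝ] (Fin N → ℝ) := (M * M.transpose).mulVecLin with hS
  have hSinj : Function.Injective S := by
    rw [← LinearMap.ker_eq_bot, LinearMap.ker_eq_bot']
    intro lam hlam
    have hdot : dotProduct lam ((M * M.transpose).mulVec lam)
        = ∑ j, (Matrix.vecMul lam M j)^2 := by
      rw [← Matrix.mulVec_mulVec, Matrix.dotProduct_mulVec]
      refine Finset.sum_congr rfl fun j _ => ?_
      simp only [Matrix.vecMul, Matrix.mulVec, Matrix.transpose_apply, dotProduct, sq]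
      congr 1
      exact Finset.sum_congr rfl fun i _ => mul_comm _ _
    have h0 : ∑ j, (Matrix.vecMul lam M j)^2 = 0 := by
      rw [← hdot]
      have : (M * M.transpose).mulVec lam = 0 := hlam
      rw [this]
      simp [dotProduct]
    have hw : Matrix.vecMul lam M = 0 := by
      funext j
      have := (Finset.sum_eq_zero_iff_of_nonneg (fun j _ => sq_nonneg _)).1 h0 j
        (Finset.mem_univ _)
      exact (pow_eq_zero_iff (by norm_num : (2:ℕ) ≠ 0)).1 this
    have hsum : ∑ i, lam i • A i = 0 := by
      funext j
      have := congrFun hw j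
      simpa [Matrix.vecMul, dotProduct, hM] using this
    funext i
    exact Fintype.linearIndependent_iff.1 hA lam hsum i
  have hSsurj : Function.Surjective S := by
    have := LinearMap.injective_iff_surjective (f := S)
    exact this.1 hSinj
  intro v
  obtain ⟨lam, hlam⟩ := hSsurj v
  refine ⟨M.transpose.mulVec lam, ?_⟩
  funext i
  have : M.mulVec (M.transpose.mulVec lam) i = v i := by
    rw [Matrix.mulVec_mulVec]
    exact congrFun hlam i
  simpa [Matrix.mulVec, dotProduct, hM] using this

open Topology Filter

noncomputable def monoP (d g : ℕ) (m : Fin d → Fin (g+1)) : MvPolynomial (Fin d) ℝ :=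
  MvPolynomial.monomial (expFin m) (1:ℝ)

noncomputable def Phi (d g N : ℕ)
    (p : ((Fin N × (Fin d → Fin (g+1))) → ℝ) × (Fin d → ℝ)) : Fin N → ℝ :=
  fun i => ∑ m : Fin d → Fin (g+1), p.1 (i, m) * MvPolynomial.eval p.2 (monoP d g m)

noncomputable def LPhi {d g N : ℕ} (c₀ : (Fin N × (Fin d → Fin (g+1))) → ℝ)
    (x₀ : Fin d → ℝ) :
    (((Fin N × (Fin d → Fin (g+1))) → ℝ) × (Fin d → ℝ)) →L[ℝ] (Fin N → ℝ) :=
  ContinuousLinearMap.pi fun i =>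
    ∑ m : Fin d → Fin (g+1),
      (c₀ (i, m) • ((evalD (monoP d g m) x₀).comp
          (ContinuousLinearMap.snd ℝ _ _))
        + MvPolynomial.eval x₀ (monoP d g m) •
          ((ContinuousLinearMap.proj (R := ℝ)
              (φ := fun _ : Fin N × (Fin d → Fin (g+1)) => ℝ) (i, m)).comp
            (ContinuousLinearMap.fst ℝ _ _)))

lemma LPhi_apply {d g N : ℕ} (c₀ u : (Fin N × (Fin d → Fin (g+1))) → ℝ)
    (x₀ w : Fin d → ℝ) (i : Fin N) :
    LPhi c₀ x₀ (u, w) i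
      = ∑ m : Fin d → Fin (g+1),
          (c₀ (i, m) * evalD (monoP d g m) x₀ w
            + MvPolynomial.eval x₀ (monoP d g m) * u (i, m)) := by
  simp [LPhi]

lemma hasStrictFDerivAt_Phi {d g N : ℕ} (c₀ : (Fin N × (Fin d → Fin (g+1))) → ℝ)
    (x₀ : Fin d → ℝ) :
    HasStrictFDerivAt (Phi d g N) (LPhi c₀ x₀) (c₀, x₀) := by
  apply hasStrictFDerivAt_pi.2
  intro i
  apply HasStrictFDerivAt.fun_sum
  intro m _
  have hc : HasStrictFDerivAt
      (fun p : ((Fin N × (Fin d → Fin (g+1))) → ℝ) × (Fin d → ℝ) => p.1 (i, m))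
      ((ContinuousLinearMap.proj (R := ℝ)
          (φ := fun _ : Fin N × (Fin d → Fin (g+1)) => ℝ) (i, m)).comp
        (ContinuousLinearMap.fst ℝ _ _)) (c₀, x₀) := by
    have h0 := ((ContinuousLinearMap.proj (R := ℝ)
          (φ := fun _ : Fin N × (Fin d → Fin (g+1)) => ℝ) (i, m)).comp
        (ContinuousLinearMap.fst ℝ ((Fin N × (Fin d → Fin (g+1))) → ℝ)
          (Fin d → ℝ))).hasStrictFDerivAt (x := (c₀, x₀))
    exact h0
  have hd : HasStrictFDerivAt
      (fun p : ((Fin N × (Fin d → Fin (g+1))) → ℝ) × (Fin d → ℝ) =>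
        MvPolynomial.eval p.2 (monoP d g m))
      ((evalD (monoP d g m) x₀).comp (ContinuousLinearMap.snd ℝ _ _)) (c₀, x₀) :=
    (hasStrictFDerivAt_mvpoly_eval (monoP d g m) x₀).comp (f := Prod.snd) (c₀, x₀) hasStrictFDerivAt_snd
  exact hc.mul hd

lemma LPhi_zero_fst {d g N : ℕ} (P : Fin N → MvPolynomial (Fin d) ℝ)
    (hPdeg : ∀ i, (P i).totalDegree ≤ g) (x₀ w : Fin d → ℝ) (i : Fin N) :
    LPhi (fun q => (P q.1).coeff (expFin q.2)) x₀ ((0 : (Fin N × (Fin d → Fin (g+1))) → ℝ), w) i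
      = ∑ j, MvPolynomial.eval x₀ (MvPolynomial.pderiv j (P i)) * w j := by
  rw [LPhi_apply]
  simp only [Pi.zero_apply, mul_zero, add_zero]
  calc ∑ m : Fin d → Fin (g+1), (P i).coeff (expFin m) * (evalD (monoP d g m) x₀ w)
      = ∑ m : Fin d → Fin (g+1), ∑ j, (P i).coeff (expFin m) *
          (MvPolynomial.eval x₀ (MvPolynomial.pderiv j (monoP d g m)) * w j) := by
        refine Finset.sum_congr rfl fun m _ => ?_
        rw [evalD_apply, Finset.mul_sum]
    _ = ∑ j, ∑ m : Fin d → Fin (g+1), (P i).coeff (expFin m) *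
          (MvPolynomial.eval x₀ (MvPolynomial.pderiv j (monoP d g m)) * w j) :=
        Finset.sum_comm
    _ = ∑ j, MvPolynomial.eval x₀ (MvPolynomial.pderiv j (P i)) * w j := by
        refine Finset.sum_congr rfl fun j _ => ?_
        rw [eval_pderiv_eq_sum_mono (P i) (hPdeg i) x₀ j, Finset.sum_mul]
        exact Finset.sum_congr rfl fun m _ => by simp only [monoP]; ring




/-- Stability of common zeros of a regular polynomial system under small coefficient
perturbations: if `x₀` is a common zero of `P 1, …, P N` (each of total degree at most `g`)
at which the gradients are linearly independent, then for every `ε > 0` there is `δ > 0`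
such that any system `Q` of the same degrees whose coefficients are `δ`-close to those of
`P` has a common zero within Euclidean distance `ε` of `x₀`. -/
theorem zeros_stable_under_coeff_perturbation (d g N : ℕ)
    (P : Fin N → MvPolynomial (Fin d) ℝ)
    (hPdeg : ∀ i, (P i).totalDegree ≤ g)
    (x₀ : Fin d → ℝ) (hx₀ : ∀ i, MvPolynomial.eval x₀ (P i) = 0)
    (hgrad : LinearIndependent ℝ
      (fun i : Fin N => fun j : Fin d =>
        MvPolynomial.eval x₀ (MvPolynomial.pderiv j (P i)))) :
    ∀ ε > (0 : ℝ), ∃ δ > (0 : ℝ),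
      ∀ Q : Fin N → MvPolynomial (Fin d) ℝ,
        (∀ i, (Q i).totalDegree ≤ g) →
        (∀ (i : Fin N) (m : Fin d →₀ ℕ), |(Q i).coeff m - (P i).coeff m| < δ) →
        ∃ x : Fin d → ℝ,
          Real.sqrt (∑ j : Fin d, (x j - x₀ j) ^ 2) < ε ∧
          ∀ i, MvPolynomial.eval x (Q i) = 0 := by
  classical
  intro ε hε
  set c₀ : (Fin N × (Fin d → Fin (g+1))) → ℝ := fun q => (P q.1).coeff (expFin q.2) with hc₀
  set ψ : (((Fin N × (Fin d → Fin (g+1))) → ℝ) × (Fin d → ℝ)) →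
      (((Fin N × (Fin d → Fin (g+1))) → ℝ) × (Fin N → ℝ)) :=
    fun p => (p.1, Phi d g N p) with hψdef
  set Lψ := (ContinuousLinearMap.fst ℝ ((Fin N × (Fin d → Fin (g+1))) → ℝ)
      (Fin d → ℝ)).prod (LPhi c₀ x₀) with hLψ
  have hψ : HasStrictFDerivAt ψ Lψ (c₀, x₀) :=
    HasStrictFDerivAt.prodMk hasStrictFDerivAt_fst (hasStrictFDerivAt_Phi c₀ x₀)
  have hΦc : ∀ (c : (Fin N × (Fin d → Fin (g+1))) → ℝ) (x : Fin d → ℝ)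
      (R : Fin N → MvPolynomial (Fin d) ℝ), (∀ i, (R i).totalDegree ≤ g) →
      (∀ q, c q = (R q.1).coeff (expFin q.2)) →
      ∀ i, Phi d g N (c, x) i = MvPolynomial.eval x (R i) := by
    intro c x R hdeg hcq i
    rw [eval_eq_sum_mono (R i) (hdeg i) x]
    refine Finset.sum_congr rfl fun m _ => ?_
    show c (i, m) * MvPolynomial.eval x (monoP d g m) = _
    rw [hcq (i, m)]
    rfl
  have hT := surj_of_linearIndependent _ hgrad
  have hsurj : Function.Surjective Lψ := by
    rintro ⟨u, v⟩
    obtain ⟨w, hw⟩ := hT (fun i => v i - LPhi c₀ x₀ (u, (0 : Fin d → ℝ)) i)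
    refine ⟨(u, w), ?_⟩
    have h2 : LPhi c₀ x₀ (u, w)
        = LPhi c₀ x₀ (u, (0 : Fin d → ℝ)) + LPhi c₀ x₀ (0, w) := by
      rw [← map_add]
      congr 1
      simp
    show (u, LPhi c₀ x₀ (u, w)) = (u, v)
    rw [h2]
    refine Prod.ext rfl (funext fun i => ?_)
    show LPhi c₀ x₀ (u, (0 : Fin d → ℝ)) i + LPhi c₀ x₀ (0, w) i = v i
    have hwi := congrFun hw i
    simp only at hwi
    rw [LPhi_zero_fst P hPdeg x₀ w i, hwi]
    ring
  have hψ0 : ψ (c₀, x₀) = (c₀, (0 : Fin N → ℝ)) := by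
    refine Prod.ext rfl (funext fun i => ?_)
    show Phi d g N (c₀, x₀) i = 0
    rw [hΦc c₀ x₀ P hPdeg (fun q => rfl) i]
    exact hx₀ i
  set ε' := ε / (Real.sqrt d + 1) with hε'def
  have hsd : (0:ℝ) < Real.sqrt d + 1 := by positivity
  have hε' : 0 < ε' := div_pos hε hsd
  have hmap := hψ.map_nhds_eq_of_surj (LinearMap.range_eq_top.2 hsurj)
  have hball : ψ '' Metric.ball (c₀, x₀) ε' ∈ 𝓝 ((c₀, (0 : Fin N → ℝ))) := by
    rw [← hψ0, ← hmap]
    exact Filter.image_mem_map (Metric.ball_mem_nhds _ hε')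
  obtain ⟨δ, hδpos, hδ⟩ := Metric.mem_nhds_iff.1 hball
  refine ⟨δ, hδpos, ?_⟩
  intro Q hQdeg hQclose
  set cQ : (Fin N × (Fin d → Fin (g+1))) → ℝ := fun q => (Q q.1).coeff (expFin q.2) with hcQ
  have hmem : (cQ, (0 : Fin N → ℝ)) ∈ Metric.ball ((c₀, (0 : Fin N → ℝ))) δ := by
    rw [Metric.mem_ball, Prod.dist_eq]
    refine max_lt ?_ (by simpa using hδpos)
    rw [dist_pi_lt_iff hδpos]
    intro q
    rw [Real.dist_eq]
    exact hQclose q.1 (expFin q.2)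
  obtain ⟨p, hp, hψp⟩ := hδ hmem
  obtain ⟨c, x⟩ := p
  have hcc : c = cQ := congrArg Prod.fst hψp
  have hΦ0 : Phi d g N (c, x) = (0 : Fin N → ℝ) := congrArg Prod.snd hψp
  subst hcc
  refine ⟨x, ?_, ?_⟩
  · have hdx : dist x x₀ < ε' := by
      refine lt_of_le_of_lt ?_ (Metric.mem_ball.1 hp)
      rw [Prod.dist_eq]
      exact le_max_right _ _
    have hsum : ∑ j : Fin d, (x j - x₀ j)^2 ≤ (d : ℝ) * ε'^2 := by
      calc ∑ j : Fin d, (x j - x₀ j)^2 ≤ ∑ _j : Fin d, ε'^2 := by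
            refine Finset.sum_le_sum fun j _ => ?_
            have h1 : |x j - x₀ j| ≤ dist x x₀ := by
              rw [← Real.dist_eq]; exact dist_le_pi_dist x x₀ j
            calc (x j - x₀ j)^2 = |x j - x₀ j|^2 := (sq_abs _).symm
              _ ≤ ε'^2 := pow_le_pow_left₀ (abs_nonneg _) (h1.trans hdx.le) 2
        _ = (d : ℝ) * ε'^2 := by simp [mul_comm]
    have h2 : Real.sqrt (∑ j : Fin d, (x j - x₀ j)^2) ≤ Real.sqrt ((d:ℝ) * ε'^2) :=
      Real.sqrt_le_sqrt hsum
    have h3 : Real.sqrt ((d:ℝ) * ε'^2) = Real.sqrt d * ε' := by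
      rw [Real.sqrt_mul (by positivity), Real.sqrt_sq hε'.le]
    have h4 : Real.sqrt d * ε' < ε := by
      have hlt : Real.sqrt d < Real.sqrt d + 1 := by linarith
      calc Real.sqrt d * ε' < (Real.sqrt d + 1) * ε' :=
            mul_lt_mul_of_pos_right hlt hε'
        _ = ε := by
            rw [hε'def, mul_comm, div_mul_cancel₀ _ (ne_of_gt hsd)]
    calc Real.sqrt (∑ j : Fin d, (x j - x₀ j)^2) ≤ Real.sqrt d * ε' := by
          rw [← h3]; exact h2
      _ < ε := h4
  · intro i
    have h5 := congrFun hΦ0 i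
    rw [← hΦc cQ x Q hQdeg (fun q => rfl) i]
    exact h5
end
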